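/- arXiv:math/0311238 — 12 statements merged into one kernel-verified Lean document; each statement's English description precedes it below -/
import Mathlib

section
/- Define f : ℂ → ℂ by f(z) = z²/conj(z) for z ≠ 0 and f(0) = 0. Then f is continuous on ℂ and f extends holomorphically from every circle bΔ(a,ρ) with |a| < ρ (every circle surrounding the origin), yet f is not holomorphic on ℂ (there is a point of ℂ at which f is not complex differentiable). -/
open Complex Metric ComplexConjugate Filter Topology

/-- A function `f` extends holomorphically from the circle `bΔ(a,ρ)`. -/
def ExtHol (f : ℂ → ℂ) (a : ℂ) (ρ : ℝ) : Prop :=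
  ∃ g : ℂ → ℂ, ContinuousOn g (closedBall a ρ) ∧
    DifferentiableOn ℂ g (ball a ρ) ∧ ∀ z ∈ sphere a ρ, g z = f z

lemma not_diff_conj : ¬ DifferentiableAt ℂ (conj : ℂ → ℂ) 1 := by
  intro h
  have hd := h.hasDerivAt
  rw [hasDerivAt_iff_tendsto_slope] at hd
  set c := deriv (conj : ℂ → ℂ) 1 with hc
  have hu : Tendsto (fun n : ℕ => (1 / (n + 1) : ℝ)) atTop (𝓝 0) :=
    tendsto_one_div_add_atTop_nhds_zero_nat
  have huC : Tendsto (fun n : ℕ => ((1 / (n + 1) : ℝ) : ℂ)) atTop (𝓝 0) := by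
    simpa [Function.comp_def] using (Complex.continuous_ofReal.tendsto 0).comp hu
  have hune : ∀ n : ℕ, ((1 / (n + 1) : ℝ) : ℂ) ≠ 0 := by
    intro n
    simp only [ne_eq, Complex.ofReal_eq_zero]
    positivity
  -- sequence along reals
  have h1 : Tendsto (fun n : ℕ => (1 : ℂ) + ((1 / (n + 1) : ℝ) : ℂ)) atTop (𝓝[≠] 1) := by
    apply tendsto_nhdsWithin_of_tendsto_nhds_of_eventually_within
    · simpa using huC.const_add 1
    · filter_upwards with n
      simp only [Set.mem_compl_iff, Set.mem_singleton_iff]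
      intro hh
      exact hune n (by linear_combination hh)
  have h2 : Tendsto (fun n : ℕ => (1 : ℂ) + Complex.I * ((1 / (n + 1) : ℝ) : ℂ)) atTop
      (𝓝[≠] 1) := by
    apply tendsto_nhdsWithin_of_tendsto_nhds_of_eventually_within
    · simpa using (huC.const_mul Complex.I).const_add 1
    · filter_upwards with n
      simp only [Set.mem_compl_iff, Set.mem_singleton_iff]
      intro hh
      have : Complex.I * ((1 / (n + 1) : ℝ) : ℂ) = 0 := by linear_combination hh
      rcases mul_eq_zero.1 this with h | h
      · exact Complex.I_ne_zero h
      · exact hune n h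
  have t1 : Tendsto (fun n : ℕ => slope (conj : ℂ → ℂ) 1 ((1 : ℂ) + ((1 / (n + 1) : ℝ) : ℂ)))
      atTop (𝓝 c) := hd.comp h1
  have t2 : Tendsto (fun n : ℕ =>
      slope (conj : ℂ → ℂ) 1 ((1 : ℂ) + Complex.I * ((1 / (n + 1) : ℝ) : ℂ)))
      atTop (𝓝 c) := hd.comp h2
  have e1 : (fun n : ℕ => slope (conj : ℂ → ℂ) 1 ((1 : ℂ) + ((1 / (n + 1) : ℝ) : ℂ)))
      = fun _ => (1 : ℂ) := by
    funext n
    have h := hune n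
    simp only [slope_def_field, conj_ofReal, map_add, map_one]
    field_simp
  have e2 : (fun n : ℕ =>
      slope (conj : ℂ → ℂ) 1 ((1 : ℂ) + Complex.I * ((1 / (n + 1) : ℝ) : ℂ)))
      = fun _ => (-1 : ℂ) := by
    funext n
    have h := hune n
    have hI : Complex.I * ((1 / (n + 1) : ℝ) : ℂ) ≠ 0 :=
      mul_ne_zero Complex.I_ne_zero h
    simp only [slope_def_field, map_add, map_one, map_mul, Complex.conj_I, conj_ofReal]
    rw [div_eq_iff (by simpa using hI)]
    ring
  rw [e1] at t1; rw [e2] at t2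
  have hc1 : c = 1 := tendsto_nhds_unique t1 tendsto_const_nhds
  have hc2 : c = -1 := tendsto_nhds_unique t2 tendsto_const_nhds
  rw [hc1] at hc2
  norm_num at hc2

theorem stmt1 :
    Continuous (fun z : ℂ => if z = 0 then 0 else z ^ 2 / conj z) ∧
    (∀ (a : ℂ) (ρ : ℝ), 0 < ρ → ‖a‖ < ρ →
      ExtHol (fun z : ℂ => if z = 0 then 0 else z ^ 2 / conj z) a ρ) ∧
    (∃ z : ℂ, ¬ DifferentiableAt ℂ (fun z : ℂ => if z = 0 then 0 else z ^ 2 / conj z) z) := by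
  set f : ℂ → ℂ := fun z => if z = 0 then 0 else z ^ 2 / conj z with hf
  have hfval : ∀ z : ℂ, z ≠ 0 → f z = z ^ 2 / conj z := by
    intro z hz; simp [hf, hz]
  refine ⟨?_, ?_, ?_⟩
  · -- continuity
    rw [continuous_iff_continuousAt]
    intro z₀
    by_cases hz₀ : z₀ = 0
    · subst hz₀
      rw [ContinuousAt]
      have hf0 : f 0 = 0 := by simp [hf]
      rw [hf0]
      have hb : ∀ z : ℂ, ‖f z‖ ≤ ‖z‖ := by
        intro z
        by_cases hz : z = 0
        · simp [hf, hz]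
        · rw [hfval z hz, norm_div, norm_pow]
          have hcn : ‖(conj z : ℂ)‖ = ‖z‖ := by simp
          rw [hcn]
          have hz' : ‖z‖ ≠ 0 := by simpa using hz
          rw [pow_two, mul_div_assoc, div_self hz', mul_one]
      exact squeeze_zero_norm hb (by simpa using (continuous_norm (E := ℂ)).tendsto 0)
    · have hconj : (conj z₀ : ℂ) ≠ 0 := by simpa using hz₀
      have hca : ContinuousAt (fun z : ℂ => z ^ 2 / conj z) z₀ :=
        ((continuous_pow 2).continuousAt).div
          (Complex.continuous_conj.continuousAt) hconj
      apply hca.congr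
      filter_upwards [isOpen_ne.mem_nhds hz₀] with z hz
      exact (hfval z hz).symm
  · -- extension
    intro a ρ hρ ha
    set g : ℂ → ℂ := fun z => z ^ 2 * (z - a) / (conj a * (z - a) + (ρ : ℂ) ^ 2) with hg
    have hden : ∀ z ∈ closedBall a ρ, conj a * (z - a) + (ρ : ℂ) ^ 2 ≠ 0 := by
      intro z hz hzero
      have h1 : ‖conj a * (z - a)‖ ≤ ‖a‖ * ρ := by
        rw [norm_mul, Complex.norm_conj]
        exact mul_le_mul_of_nonneg_left (by simpa [Complex.dist_eq] using hz)
          (norm_nonneg a)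
      have h2 : ‖conj a * (z - a)‖ = ρ ^ 2 := by
        have : conj a * (z - a) = -(ρ : ℂ) ^ 2 := by linear_combination hzero
        rw [this]
        simp [abs_of_pos hρ, pow_two]
      nlinarith [norm_nonneg a]
    have hdiff : DifferentiableOn ℂ g (closedBall a ρ) := by
      intro z hz
      apply DifferentiableAt.differentiableWithinAt
      exact (((differentiableAt_id.pow 2).mul (differentiableAt_id.sub
        (differentiableAt_const a))).div
        (((differentiableAt_const _).mul (differentiableAt_id.sub
          (differentiableAt_const a))).add (differentiableAt_const _)) (hden z hz))
    refine ⟨g, hdiff.continuousOn, hdiff.mono ball_subset_closedBall, ?_⟩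
    intro z hz
    have hzρ : ‖z - a‖ = ρ := by simpa [Complex.dist_eq] using hz
    have hzne : z ≠ 0 := by
      intro h; subst h
      simp only [zero_sub, norm_neg] at hzρ
      exact absurd hzρ (ne_of_lt ha)
    have hza : z - a ≠ 0 := by
      intro h
      rw [h] at hzρ
      simp at hzρ
      exact absurd hzρ.symm (ne_of_gt hρ)
    have hkey : (conj z - conj a) * (z - a) = (ρ : ℂ) ^ 2 := by
      have : (conj z - conj a) * (z - a) = conj (z - a) * (z - a) := by
        rw [map_sub]
      rw [this, Complex.conj_mul']
      norm_cast
      rw [← hzρ]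
    have hdz : conj a * (z - a) + (ρ : ℂ) ^ 2 = conj z * (z - a) := by
      rw [← hkey]; ring
    rw [hfval z hzne, hg]
    simp only
    rw [hdz]
    have hcz : (conj z : ℂ) ≠ 0 := by simpa using hzne
    field_simp
  · -- not differentiable
    refine ⟨1, fun h => not_diff_conj ?_⟩
    have hf1 : f 1 = 1 := by norm_num [hf]
    have hd : DifferentiableAt ℂ (fun z => z ^ 2 / f z) 1 :=
      (differentiableAt_id.pow 2).div h (by rw [hf1]; exact one_ne_zero)
    apply hd.congr_of_eventuallyEq
    filter_upwards [isOpen_ne.mem_nhds (one_ne_zero : (1:ℂ) ≠ 0)] with z hz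
    have hcz : (conj z : ℂ) ≠ 0 := by simpa using hz
    rw [hfval z hz, div_div_eq_mul_div, mul_comm, mul_div_assoc,
      div_self (pow_ne_zero 2 hz), mul_one]
end

section
/- Let z, w ∈ ℂ with w ≠ conj(z), let a ∈ ℂ and R > 0. Then (z,w) ∈ Λ_{a,R} if and only if there exists t > 0 such that a = z + t(z − conj(w)) and R = √(t(t+1)) · |z − conj(w)|. Moreover, if (z,w) ∈ Λ_{a,R}, then a = z + (1/2)·(√(1 + 4R²/|z − conj(w)|²) − 1)·(z − conj(w)). -/
open Complex Metric ComplexConjugate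

/-- The variety `Λ_{a,ρ} = {(z,w) : (z−a)(w−conj a) = ρ², 0 < |z−a| < ρ}`. -/
def Lam (a : ℂ) (ρ : ℝ) : Set (ℂ × ℂ) :=
  {p | (p.1 - a) * (p.2 - conj a) = (ρ : ℂ) ^ 2 ∧
        0 < ‖p.1 - a‖ ∧ ‖p.1 - a‖ < ρ}

theorem stmt3 (z w a : ℂ) (R : ℝ) (hR : 0 < R) (hzw : w ≠ conj z) :
    ((z, w) ∈ Lam a R ↔
      ∃ t : ℝ, 0 < t ∧ a = z + (t : ℂ) * (z - conj w) ∧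
        R = Real.sqrt (t * (t + 1)) * ‖z - conj w‖) ∧
    ((z, w) ∈ Lam a R →
      a = z + ((1 / 2 : ℝ) : ℂ) *
        ((Real.sqrt (1 + 4 * R ^ 2 / (‖z - conj w‖) ^ 2) - 1 : ℝ) : ℂ) *
        (z - conj w)) := by
  have hzw' : z - conj w ≠ 0 := by
    intro h
    apply hzw
    have : z = conj w := by linear_combination h
    rw [this, Complex.conj_conj]
  set d : ℝ := ‖z - conj w‖ with hd_def
  have hd : 0 < d := by simpa [hd_def] using hzw'
  have hcd : ((d : ℝ) : ℂ) ^ 2 = (z - conj w) * (conj z - w) := by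
    have h1 : (z - conj w) * conj (z - conj w) = (Complex.normSq (z - conj w) : ℂ) :=
      Complex.mul_conj _
    simp only [map_sub, Complex.conj_conj] at h1
    rw [h1]; norm_cast; exact Complex.sq_norm _
  have main : (z, w) ∈ Lam a R ↔
      ∃ t : ℝ, 0 < t ∧ a = z + (t : ℂ) * (z - conj w) ∧
        R = Real.sqrt (t * (t + 1)) * d := by
    constructor
    · rintro ⟨heq, h0, h1⟩
      simp only at heq h0 h1
      set m : ℝ := ‖z - a‖ with hm_def
      have hu : z - a ≠ 0 := by
        intro h; rw [hm_def, h] at h0; simp at h0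
      have hc : conj z - conj a ≠ 0 := by
        intro h
        apply hu
        have := congrArg conj h
        simpa [map_sub, Complex.conj_conj] using this
      have hkey : (conj z - conj a) * (conj w - a) = ((R : ℝ) : ℂ) ^ 2 := by
        have := congrArg conj heq
        simpa [map_mul, map_sub, map_pow, Complex.conj_conj, Complex.conj_ofReal] using this
      have hm2 : ((m : ℝ) : ℂ) ^ 2 = (z - a) * (conj z - conj a) := by
        have h1 : (z - a) * conj (z - a) = (Complex.normSq (z - a) : ℂ) := Complex.mul_conj _
        simp only [map_sub] at h1
        rw [h1]; norm_cast; rw [hm_def]; exact Complex.sq_norm _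
      have hden : (0:ℝ) < R ^ 2 - m ^ 2 := by nlinarith
      have hdenC : ((R : ℝ) : ℂ) ^ 2 - ((m : ℝ) : ℂ) ^ 2 ≠ 0 := by
        have : ((R ^ 2 - m ^ 2 : ℝ) : ℂ) ≠ 0 := Complex.ofReal_ne_zero.mpr hden.ne'
        push_cast at this; exact this
      have hzcw : (z - conj w) = (((m : ℝ) : ℂ) ^ 2 - ((R : ℝ) : ℂ) ^ 2) / (conj z - conj a) := by
        rw [eq_div_iff hc]
        linear_combination -hkey - hm2
      refine ⟨m ^ 2 / (R ^ 2 - m ^ 2), div_pos (by positivity) hden, ?_, ?_⟩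
      · push_cast
        rw [hzcw]
        field_simp
        linear_combination (((R:ℂ))^2 - ((m:ℂ))^2) * hm2
      · have hdval : d = (R ^ 2 - m ^ 2) / m := by
          have : ‖z - conj w‖
              = ‖(((m : ℝ) : ℂ) ^ 2 - ((R : ℝ) : ℂ) ^ 2) / (conj z - conj a)‖ := by
            rw [← hzcw]
          rw [hd_def, this, norm_div]
          have habs1 : ‖((m : ℝ) : ℂ) ^ 2 - ((R : ℝ) : ℂ) ^ 2‖ = R ^ 2 - m ^ 2 := by
            rw [show (((m : ℝ) : ℂ) ^ 2 - ((R : ℝ) : ℂ) ^ 2) = ((m ^ 2 - R ^ 2 : ℝ) : ℂ) by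
              push_cast; ring, Complex.norm_real, Real.norm_eq_abs, abs_of_nonpos (by nlinarith)]
            ring
          have habs2 : ‖conj z - conj a‖ = m := by
            rw [show conj z - conj a = conj (z - a) by rw [map_sub], Complex.norm_conj, hm_def]
          rw [habs1, habs2]
        have hsq : (m ^ 2 / (R ^ 2 - m ^ 2)) * (m ^ 2 / (R ^ 2 - m ^ 2) + 1)
            = (m * R / (R ^ 2 - m ^ 2)) ^ 2 := by
          field_simp; ring
        rw [hsq, Real.sqrt_sq (by positivity), hdval]
        field_simp
    · rintro ⟨t, ht, ha, hRt⟩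
      have htt : (0:ℝ) ≤ t * (t + 1) := by nlinarith
      have hR2 : R ^ 2 = t * (t + 1) * d ^ 2 := by
        rw [hRt, mul_pow, Real.sq_sqrt htt]
      have hza : z - a = -(t : ℂ) * (z - conj w) := by rw [ha]; ring
      refine ⟨?_, ?_, ?_⟩
      · simp only
        have hca : conj a = conj z + (t : ℂ) * (conj z - w) := by
          rw [ha]
          simp [map_add, map_mul, map_sub, Complex.conj_conj, Complex.conj_ofReal]
        rw [hza, hca]
        have hR2C : ((R : ℝ) : ℂ) ^ 2 = (t : ℂ) * ((t : ℂ) + 1) * ((d : ℝ) : ℂ) ^ 2 := by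
          have := congrArg (Complex.ofReal) hR2
          push_cast at this; exact this
        rw [hR2C]
        linear_combination (-(t : ℂ) * ((t : ℂ) + 1)) * hcd
      · simp only
        rw [hza, norm_mul, norm_neg, Complex.norm_real, Real.norm_eq_abs, abs_of_pos ht]
        positivity
      · simp only
        rw [hza, norm_mul, norm_neg, Complex.norm_real, Real.norm_eq_abs, abs_of_pos ht, hRt]
        have hlt : t < Real.sqrt (t * (t + 1)) :=
          (Real.lt_sqrt ht.le).mpr (by nlinarith)
        exact mul_lt_mul_of_pos_right hlt hd
  refine ⟨main, fun hmem => ?_⟩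
  obtain ⟨t, ht, ha, hRt⟩ := main.mp hmem
  have htt : (0:ℝ) ≤ t * (t + 1) := by nlinarith
  have hR2 : R ^ 2 = t * (t + 1) * d ^ 2 := by
    rw [hRt, mul_pow, Real.sq_sqrt htt]
  have harg : 1 + 4 * R ^ 2 / d ^ 2 = (2 * t + 1) ^ 2 := by
    rw [hR2]; field_simp; ring
  have hcoef : (1 / 2 : ℝ) * (Real.sqrt (1 + 4 * R ^ 2 / d ^ 2) - 1) = t := by
    rw [harg, Real.sqrt_sq (by linarith)]; ring
  rw [ha]
  congr 1
  rw [← Complex.ofReal_mul, hcoef]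
end

section
/- Let z ∈ ℂ, t > 0, φ ∈ ℝ, a ∈ ℂ and R > 0. Then (z + t·e^{iφ}, conj(z) − t·e^{−iφ}) ∈ Λ_{a,R} if and only if a = z + √(t² + R²)·e^{iφ}. -/
open Complex Metric ComplexConjugate

theorem stmt4 (z : ℂ) (t : ℝ) (ht : 0 < t) (φ : ℝ) (a : ℂ) (R : ℝ) (hR : 0 < R) :
    (z + (t : ℂ) * Complex.exp ((φ : ℂ) * Complex.I),
      conj z - (t : ℂ) * Complex.exp (-(φ : ℂ) * Complex.I)) ∈ Lam a R ↔
    a = z + (Real.sqrt (t ^ 2 + R ^ 2) : ℂ) * Complex.exp ((φ : ℂ) * Complex.I) := by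
  have hse : (0:ℝ) ≤ t^2 + R^2 := by positivity
  set s := Real.sqrt (t^2 + R^2) with hsdef
  have hs2 : s^2 = t^2 + R^2 := Real.sq_sqrt hse
  have hs0 : 0 < s := Real.sqrt_pos.2 (by positivity)
  have hts : t < s := by nlinarith
  have hsR : s < t + R := by nlinarith
  have hRs : R ≤ s := by nlinarith
  set e := Complex.exp ((φ:ℂ) * Complex.I) with hedef
  set e' := Complex.exp (-(φ:ℂ) * Complex.I) with he'def
  have he1 : e * e' = 1 := by rw [hedef, he'def, ← Complex.exp_add]; simp
  have habs : ‖e‖ = 1 := Complex.norm_exp_ofReal_mul_I φ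
  have hconj : conj e = e' := by rw [hedef, he'def, ← Complex.exp_conj]; simp
  have hconj' : conj e' = e := by rw [hedef, he'def, ← Complex.exp_conj]; simp
  have hs2' : (s:ℂ)^2 = (t:ℂ)^2 + (R:ℂ)^2 := by exact_mod_cast congrArg (Complex.ofReal) hs2
  constructor
  · rintro ⟨heq, hpos, hlt⟩
    simp only at heq hpos hlt
    obtain ⟨v, hvdef⟩ : ∃ v, v = (z - a) * e' := ⟨_, rfl⟩
    have hv1 : v * e = z - a := by
      rw [hvdef]
      calc (z - a) * e' * e = (z - a) * (e * e') := by ring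
        _ = z - a := by rw [he1, mul_one]
    have hcv : conj v * e' = conj (z - a) := by
      rw [hvdef, map_mul, hconj']
      calc conj (z - a) * e * e' = conj (z - a) * (e * e') := by ring
        _ = conj (z - a) := by rw [he1, mul_one]
    have h1 : (v + t) * e = z + t * e - a := by
      calc (v + ↑t) * e = v * e + ↑t * e := by ring
        _ = z + ↑t * e - a := by rw [hv1]; ring
    have h2 : (conj v - t) * e' = conj z - t * e' - conj a := by
      calc (conj v - ↑t) * e' = conj v * e' - ↑t * e' := by ring
        _ = conj z - ↑t * e' - conj a := by rw [hcv, map_sub]; ring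
    have key : (v + t) * (conj v - t) = (((R^2 : ℝ)):ℂ) := by
      calc (v + ↑t) * (conj v - ↑t) = ((v + ↑t) * e) * ((conj v - ↑t) * e') := by
            rw [show (v + ↑t) * e * ((conj v - ↑t) * e')
              = (v + ↑t) * (conj v - ↑t) * (e * e') by ring, he1, mul_one]
        _ = (((R^2:ℝ)):ℂ) := by rw [h1, h2, heq]; push_cast; ring
    have him := congrArg Complex.im key
    have hre := congrArg Complex.re key
    simp [Complex.mul_im, Complex.mul_re, sq] at him hre
    have hvim : v.im = 0 := by
      rcases mul_eq_zero.mp (show t * v.im = 0 by nlinarith [him]) with h | h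
      · exact absurd h (by positivity)
      · exact h
    have hre2 : v.re^2 = t^2 + R^2 := by nlinarith [hre, hvim]
    have habsv : ‖z + ↑t * e - a‖ = |v.re + t| := by
      rw [← h1, show v + (t:ℂ) = ((v.re + t : ℝ):ℂ) from Complex.ext (by simp) (by simp [hvim]),
        norm_mul, habs, mul_one, Complex.norm_real, Real.norm_eq_abs]
    rw [habsv] at hlt
    have hlt2 : v.re + t < R := lt_of_le_of_lt (le_abs_self _) hlt
    have hvre : v.re = -s := by
      rcases mul_eq_zero.mp (show (v.re - s) * (v.re + s) = 0 by nlinarith) with h | h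
      · nlinarith
      · linarith
    have hv : v = ((-s : ℝ):ℂ) := Complex.ext (by simp [hvre]) (by simp [hvim])
    rw [hv] at hv1
    push_cast at hv1
    linear_combination hv1
  · rintro rfl
    have hconjsum : conj (z + (s:ℂ) * e) = conj z + (s:ℂ) * e' := by
      rw [map_add, map_mul, hconj, Complex.conj_ofReal]
    refine ⟨?_, ?_, ?_⟩
    · simp only
      rw [hconjsum]
      have h1 : z + (t:ℂ) * e - (z + (s:ℂ) * e) = ((t:ℂ) - s) * e := by ring
      have h2 : conj z - (t:ℂ) * e' - (conj z + (s:ℂ) * e') = (-(t:ℂ) - s) * e' := by ring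
      rw [h1, h2]
      calc ((t:ℂ) - s) * e * ((-(t:ℂ) - s) * e')
          = (((t:ℂ) - s) * (-(t:ℂ) - s)) * (e * e') := by ring
        _ = (R:ℂ)^2 := by rw [he1, mul_one]; linear_combination hs2'
    · simp only
      have h1 : z + (t:ℂ) * e - (z + (s:ℂ) * e) = (((t - s : ℝ)):ℂ) * e := by push_cast; ring
      rw [h1, norm_mul, habs, mul_one, Complex.norm_real, Real.norm_eq_abs, abs_of_neg (by linarith)]
      linarith
    · simp only
      have h1 : z + (t:ℂ) * e - (z + (s:ℂ) * e) = (((t - s : ℝ)):ℂ) * e := by push_cast; ring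
      rw [h1, norm_mul, habs, mul_one, Complex.norm_real, Real.norm_eq_abs, abs_of_neg (by linarith)]
      linarith
end

section
/- Let a ∈ ℂ, 0 < r₁ < r₂ and γ = (r₁+r₂)/2. Then Ω(A(a,r₁,r₂)) is the disjoint union of the sets Λ_{b,γ} over those b ∈ ℂ for which bΔ(b,γ) is contained in the interior of A(a,r₁,r₂): every point of Ω(A(a,r₁,r₂)) belongs to Λ_{b,γ} for exactly one such b, and each such Λ_{b,γ} is contained in Ω(A(a,r₁,r₂)). -/
open Complex Metric ComplexConjugate

/-- The closed annulus `A(a,r₁,r₂) = {z : r₁ ≤ |z−a| ≤ r₂}`. -/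
def Ann (a : ℂ) (r₁ r₂ : ℝ) : Set ℂ :=
  {z | r₁ ≤ ‖z - a‖ ∧ ‖z - a‖ ≤ r₂}

/-- `Ω(A(a,r₁,r₂))`: the union of all `Λ_{b,ρ}` with `bΔ(b,ρ) ⊆ Int A(a,r₁,r₂)`
surrounding `a`. -/
def OmegaA (a : ℂ) (r₁ r₂ : ℝ) : Set (ℂ × ℂ) :=
  {p | ∃ (b : ℂ) (ρ : ℝ), 0 < ρ ∧ sphere b ρ ⊆ interior (Ann a r₁ r₂) ∧
        ‖b - a‖ < ρ ∧ p ∈ Lam b ρ}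

/-! ### Auxiliary lemmas -/

lemma interior_Ann {a : ℂ} {r₁ r₂ : ℝ} (h1 : 0 < r₁) (h12 : r₁ < r₂) :
    interior (Ann a r₁ r₂) = {z | r₁ < ‖z - a‖ ∧ ‖z - a‖ < r₂} := by
  have hA : Ann a r₁ r₂ = closedBall a r₂ ∩ (ball a r₁)ᶜ := by
    ext z
    simp only [Ann, Set.mem_setOf_eq, Set.mem_inter_iff, mem_closedBall, Set.mem_compl_iff,
      mem_ball, Complex.dist_eq, not_lt]
    tauto
  rw [hA, interior_inter, interior_closedBall a (by linarith : r₂ ≠ 0), interior_compl,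
    closure_ball a (ne_of_gt h1)]
  ext z
  simp only [Set.mem_inter_iff, mem_ball, Set.mem_compl_iff, mem_closedBall, Complex.dist_eq,
    not_le, Set.mem_setOf_eq]
  tauto

lemma sphere_subset_bounds {a b : ℂ} {r₁ r₂ ρ : ℝ} (h1 : 0 < r₁) (h12 : r₁ < r₂) (hρ : 0 < ρ)
    (hsub : sphere b ρ ⊆ interior (Ann a r₁ r₂)) :
    ‖b - a‖ + ρ < r₂ ∧ r₁ < |ρ - ‖b - a‖| := by
  rw [interior_Ann h1 h12] at hsub
  obtain ⟨u, hu1, hbu⟩ : ∃ u : ℂ, ‖u‖ = 1 ∧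
      b - a = ((‖b - a‖ : ℝ) : ℂ) * u := by
    by_cases hb : b = a
    · exact ⟨1, by simp, by simp [hb]⟩
    · refine ⟨(b - a) / ‖b - a‖, ?_, ?_⟩
      · rw [norm_div, Complex.norm_real, Real.norm_eq_abs, abs_norm, div_self]
        simpa [sub_eq_zero] using hb
      · have hne : ((‖b - a‖ : ℝ) : ℂ) ≠ 0 := by
          simp [sub_eq_zero, hb]
        rw [mul_div_assoc', mul_comm, mul_div_assoc, div_self hne, mul_one]
  set d : ℝ := ‖b - a‖ with hd
  have hd0 : 0 ≤ d := norm_nonneg _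
  have hplus : b + (ρ : ℂ) * u ∈ sphere b ρ := by
    simp only [mem_sphere, Complex.dist_eq]
    rw [show b + (ρ : ℂ) * u - b = (ρ : ℂ) * u by ring, norm_mul, Complex.norm_real, Real.norm_eq_abs, hu1,
      mul_one, abs_of_pos hρ]
  have hminus : b - (ρ : ℂ) * u ∈ sphere b ρ := by
    simp only [mem_sphere, Complex.dist_eq]
    rw [show b - (ρ : ℂ) * u - b = (-ρ : ℝ) * u by push_cast; ring, norm_mul,
      Complex.norm_real, Real.norm_eq_abs, hu1, mul_one, abs_neg, abs_of_pos hρ]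
  have eplus : ‖b + (ρ : ℂ) * u - a‖ = d + ρ := by
    rw [show b + (ρ : ℂ) * u - a = (b - a) + (ρ : ℂ) * u by ring, hbu,
      show ((d : ℝ) : ℂ) * u + (ρ : ℂ) * u = ((d + ρ : ℝ) : ℂ) * u by push_cast; ring,
      norm_mul, Complex.norm_real, Real.norm_eq_abs, hu1, mul_one, abs_of_pos (by linarith)]
  have eminus : ‖b - (ρ : ℂ) * u - a‖ = |d - ρ| := by
    rw [show b - (ρ : ℂ) * u - a = (b - a) - (ρ : ℂ) * u by ring, hbu,
      show ((d : ℝ) : ℂ) * u - (ρ : ℂ) * u = ((d - ρ : ℝ) : ℂ) * u by push_cast; ring,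
      norm_mul, Complex.norm_real, Real.norm_eq_abs, hu1, mul_one]
  have mplus := hsub hplus
  have mminus := hsub hminus
  rw [Set.mem_setOf_eq, eplus] at mplus
  rw [Set.mem_setOf_eq, eminus] at mminus
  exact ⟨by linarith [mplus.2], by rw [abs_sub_comm]; exact mminus.1⟩

lemma bounds_sphere_subset {a b : ℂ} {r₁ r₂ ρ : ℝ} (h1 : 0 < r₁) (h12 : r₁ < r₂)
    (hlo : r₁ + ‖b - a‖ < ρ) (hhi : ρ + ‖b - a‖ < r₂) :
    sphere b ρ ⊆ interior (Ann a r₁ r₂) := by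
  rw [interior_Ann h1 h12]
  intro z hz
  rw [mem_sphere, Complex.dist_eq] at hz
  have t1 : ‖z - b‖ ≤ ‖z - a‖ + ‖a - b‖ :=
    norm_sub_le_norm_sub_add_norm_sub z a b
  have t2 : ‖z - a‖ ≤ ‖z - b‖ + ‖b - a‖ :=
    norm_sub_le_norm_sub_add_norm_sub z b a
  have hab : ‖a - b‖ = ‖b - a‖ :=
    norm_sub_rev a b
  constructor
  · rw [hab] at t1; linarith
  · linarith

lemma lam_key {γ : ℝ} {b : ℂ} {p : ℂ × ℂ} (hp : p ∈ Lam b γ) :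
    (p.1 - b) * (p.2 - conj p.1) = ((γ^2 - (‖p.1 - b‖)^2 : ℝ) : ℂ) := by
  obtain ⟨heq, h0, hlt⟩ := hp
  have hc : p.2 - conj b = (p.2 - conj p.1) + conj (p.1 - b) := by
    rw [map_sub]; ring
  rw [hc] at heq
  have hnorm : (p.1 - b) * conj (p.1 - b) = ((‖p.1 - b‖)^2 : ℝ) := by
    rw [Complex.mul_conj]; norm_cast; rw [Complex.sq_norm]
  push_cast
  rw [mul_add, hnorm] at heq
  push_cast at heq
  linear_combination heq

lemma real_aux {A₁ A₂ M γ : ℝ} (h₁ : A₁ * M = γ^2 - A₁^2) (h₂ : A₂ * M = γ^2 - A₂^2)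
    (p1 : 0 < A₁) (p2 : 0 < A₂) (hM : 0 < M) : A₁ = A₂ := by
  have h : (A₁ - A₂) * (M + A₁ + A₂) = 0 := by nlinarith [h₁, h₂]
  rcases mul_eq_zero.1 h with h | h
  · linarith
  · nlinarith

lemma lam_unique {γ : ℝ} (hγ : 0 < γ) {b₁ b₂ : ℂ} {p : ℂ × ℂ}
    (h1 : p ∈ Lam b₁ γ) (h2 : p ∈ Lam b₂ γ) : b₁ = b₂ := by
  have h10 := h1.2.1
  have h1γ := h1.2.2
  have h20 := h2.2.1
  have h2γ := h2.2.2
  have k1 := lam_key h1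
  have k2 := lam_key h2
  have hR1pos : (0:ℝ) < γ^2 - (‖p.1 - b₁‖)^2 := by nlinarith
  have hR2pos : (0:ℝ) < γ^2 - (‖p.1 - b₂‖)^2 := by nlinarith
  have hcne : p.2 - conj p.1 ≠ 0 := by
    intro h
    rw [h, mul_zero] at k1
    have : γ^2 - (‖p.1 - b₁‖)^2 = 0 := by exact_mod_cast k1.symm
    linarith
  have hM : 0 < ‖p.2 - conj p.1‖ := norm_pos_iff.mpr hcne
  have habs1 : ‖p.1 - b₁‖ * ‖p.2 - conj p.1‖
      = γ^2 - (‖p.1 - b₁‖)^2 := by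
    rw [← norm_mul, k1, Complex.norm_real, Real.norm_eq_abs, abs_of_pos hR1pos]
  have habs2 : ‖p.1 - b₂‖ * ‖p.2 - conj p.1‖
      = γ^2 - (‖p.1 - b₂‖)^2 := by
    rw [← norm_mul, k2, Complex.norm_real, Real.norm_eq_abs, abs_of_pos hR2pos]
  have hA : ‖p.1 - b₁‖ = ‖p.1 - b₂‖ :=
    real_aux habs1 habs2 h10 h20 hM
  have hu : (p.1 - b₁) * (p.2 - conj p.1) = (p.1 - b₂) * (p.2 - conj p.1) := by
    rw [k1, k2, hA]
  have := mul_right_cancel₀ hcne hu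
  have hb : b₁ = b₂ := by linear_combination -this
  exact hb

lemma bound_aux {r s m ρ γ : ℝ} (hr : 0 < r) (hs : 0 < s) (hm : 0 < m)
    (hρ : 0 < ρ) (hγ : 0 < γ) (e1 : r^2 + r*m = ρ^2) (e2 : s^2 + s*m = γ^2) :
    |r - s| ≤ |ρ - γ| := by
  have hA : 0 < r*(s+m) := by positivity
  have hB : 0 < s*(r+m) := by positivity
  have hprod : (r*(s+m)) * (s*(r+m)) = ρ^2 * γ^2 := by rw [← e1, ← e2]; ring
  have amgm : r*(s+m) + s*(r+m) ≥ 2*(ρ*γ) := by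
    nlinarith [sq_nonneg (r*(s+m) - s*(r+m)), hprod, mul_pos hρ hγ, hA, hB]
  have hsum : r + s + m ≥ ρ + γ := by
    nlinarith [amgm, e1, e2, sq_nonneg m, hr, hs, hm, hρ, hγ]
  have hkey : (r - s) * (r + s + m) = ρ^2 - γ^2 := by nlinarith [e1, e2]
  have h1 : |r - s| * (r + s + m) = |ρ - γ| * (ρ + γ) := by
    rw [← abs_of_pos (show (0:ℝ) < r + s + m by linarith), ← abs_mul, hkey,
      show ρ^2 - γ^2 = (ρ - γ) * (ρ + γ) from by ring, abs_mul,
      abs_of_pos (show (0:ℝ) < ρ + γ by linarith)]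
  nlinarith [abs_nonneg (r - s), abs_nonneg (ρ - γ), h1, hsum]

lemma exists_recenter {γ ρ : ℝ} (hγ : 0 < γ) {b : ℂ} {p : ℂ × ℂ} (hp : p ∈ Lam b ρ) :
    ∃ b' : ℂ, p ∈ Lam b' γ ∧ ‖b' - b‖ ≤ |ρ - γ| := by
  obtain ⟨heq, h0, hlt⟩ := hp
  set z := p.1 with hz
  set w := p.2 with hw
  set r : ℝ := ‖z - b‖ with hrdef
  have hr : 0 < r := h0
  have hρ : 0 < ρ := lt_trans hr hlt
  set m : ℝ := (ρ^2 - r^2) / r with hmdef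
  have hm : 0 < m := by
    apply div_pos _ hr
    nlinarith
  have hrm : r^2 + r*m = ρ^2 := by
    field_simp [hmdef]
    rw [hmdef, mul_add, mul_div_assoc', mul_div_cancel_left₀ _ hr.ne']; ring
  set S : ℝ := Real.sqrt (m^2 + 4*γ^2) with hSdef
  have hS2 : S^2 = m^2 + 4*γ^2 := Real.sq_sqrt (by positivity)
  have hSpos : 0 ≤ S := Real.sqrt_nonneg _
  set s : ℝ := (S - m) / 2 with hsdef
  have hspos : 0 < s := by
    have : m < S := by nlinarith
    simp only [hsdef]; linarith
  have hsm : s^2 + s*m = γ^2 := by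
    simp only [hsdef]; nlinarith [hS2]
  have hslt : s < γ := by nlinarith
  refine ⟨b + (1 - (s/r : ℝ)) * (z - b), ?_, ?_⟩
  · have hzb' : z - (b + ((1 - (s/r : ℝ)) : ℂ) * (z - b)) = ((s/r : ℝ) : ℂ) * (z - b) := by
      push_cast; ring
    have habs : ‖z - (b + ((1 - (s/r : ℝ)) : ℂ) * (z - b))‖ = s := by
      rw [hzb', norm_mul, Complex.norm_real, Real.norm_eq_abs, ← hrdef,
        abs_of_pos (by positivity : (0:ℝ) < s/r)]
      field_simp
    refine ⟨?_, ?_, ?_⟩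
    · show (z - _) * (w - conj _) = _
      rw [hzb']
      have hconj : w - conj (b + ((1 - (s/r : ℝ)) : ℂ) * (z - b))
          = (w - conj b) - ((1 - (s/r : ℝ)) : ℂ) * conj (z - b) := by
        rw [map_add, map_mul, map_sub]
        push_cast
        simp [Complex.conj_ofReal]
        ring
      rw [hconj]
      have hnorm : (z - b) * conj (z - b) = ((r^2 : ℝ) : ℂ) := by
        rw [Complex.mul_conj, hrdef]
        norm_cast
        rw [Complex.sq_norm]
      have expand : ((s/r : ℝ) : ℂ) * (z - b) * ((w - conj b) - ((1 - (s/r : ℝ)) : ℂ) * conj (z - b))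
          = ((s/r : ℝ) : ℂ) * ((z - b) * (w - conj b))
            - ((s/r : ℝ) : ℂ) * ((1 - (s/r : ℝ)) : ℂ) * ((z - b) * conj (z - b)) := by
        push_cast; ring
      rw [expand, heq, hnorm]
      have hreal : (s/r) * ρ^2 - (s/r) * (1 - s/r) * r^2 = γ^2 := by
        have e : (s/r) * ρ^2 - (s/r) * (1 - s/r) * r^2 = s*m + s^2 := by
          rw [hmdef]; field_simp; ring
        rw [e]; linarith [hsm]
      have hC := congrArg (Complex.ofReal) hreal
      push_cast at hC ⊢
      linear_combination hC
    · rw [habs]; exact hspos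
    · rw [habs]; exact hslt
  · have : (b + ((1 - (s/r : ℝ)) : ℂ) * (z - b)) - b = ((1 - s/r : ℝ) : ℂ) * (z - b) := by
      push_cast; ring
    rw [this, norm_mul, Complex.norm_real, Real.norm_eq_abs, ← hrdef]
    have : |1 - s/r| * r = |r - s| := by
      rw [abs_sub_comm r s, show s - r = (s/r - 1) * r by field_simp, abs_mul,
        abs_of_pos hr, abs_sub_comm (s/r) 1]
    rw [this]
    exact bound_aux hr hspos hm hρ hγ hrm hsm

theorem stmt5 (a : ℂ) (r₁ r₂ : ℝ) (h1 : 0 < r₁) (h12 : r₁ < r₂) :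
    (∀ p ∈ OmegaA a r₁ r₂,
      ∃! b : ℂ, sphere b ((r₁ + r₂) / 2) ⊆ interior (Ann a r₁ r₂) ∧
        p ∈ Lam b ((r₁ + r₂) / 2)) ∧
    (∀ b : ℂ, sphere b ((r₁ + r₂) / 2) ⊆ interior (Ann a r₁ r₂) →
      Lam b ((r₁ + r₂) / 2) ⊆ OmegaA a r₁ r₂) := by
  have hγpos : (0:ℝ) < (r₁ + r₂) / 2 := by linarith
  constructor
  · rintro p ⟨b, ρ, hρ, hsph, hba, hpl⟩
    obtain ⟨hhi, hlo'⟩ := sphere_subset_bounds h1 h12 hρ hsph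
    have hlo : r₁ < ρ - ‖b - a‖ := by
      rcases abs_cases (ρ - ‖b - a‖) with ⟨h, _⟩ | ⟨h, hneg⟩
      · rw [h] at hlo'; exact hlo'
      · linarith
    obtain ⟨b', hp', hbb'⟩ := exists_recenter hγpos hpl
    have tri : ‖b' - a‖ ≤ ‖b' - b‖ + ‖b - a‖ :=
      norm_sub_le_norm_sub_add_norm_sub b' b a
    have habs : ‖b' - a‖ < (r₂ - r₁) / 2 := by
      rcases abs_cases (ρ - (r₁ + r₂) / 2) with ⟨h, _⟩ | ⟨h, _⟩ <;>
        (rw [h] at hbb'; linarith)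
    have hsph' : sphere b' ((r₁ + r₂) / 2) ⊆ interior (Ann a r₁ r₂) :=
      bounds_sphere_subset h1 h12 (by linarith) (by linarith)
    exact ⟨b', ⟨hsph', hp'⟩, fun b'' hb'' => lam_unique hγpos hb''.2 hp'⟩
  · intro b hsph p hp
    obtain ⟨hhi, -⟩ := sphere_subset_bounds h1 h12 hγpos hsph
    have hd : ‖b - a‖ < (r₁ + r₂) / 2 := by linarith
    exact ⟨b, (r₁ + r₂) / 2, hγpos, hsph, hd, hp⟩
end

section
/- Let a ∈ ℂ, 0 < r₁ < r₂, and let z₀ be a point of the interior of A(a,r₁,r₂). Then there exist an open neighbourhood U₀ of z₀ in ℂ, an open convex cone K ⊆ ℂ with vertex at the origin containing the ray {t(a−z₀) : t > 0}, and r > 0, such that {(z + ζ, conj(z) − conj(ζ)) : z ∈ U₀, ζ ∈ K, |ζ| < r} ⊆ Ω(A(a,r₁,r₂)). -/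
open Complex Metric ComplexConjugate

set_option maxHeartbeats 2000000 in
theorem stmt7 (a : ℂ) (r₁ r₂ : ℝ) (h1 : 0 < r₁) (h12 : r₁ < r₂)
    (z₀ : ℂ) (hz₀ : z₀ ∈ interior (Ann a r₁ r₂)) :
    ∃ (U₀ : Set ℂ) (K : Set ℂ) (r : ℝ),
      IsOpen U₀ ∧ z₀ ∈ U₀ ∧
      IsOpen K ∧ Convex ℝ K ∧ K.Nonempty ∧ (0 : ℂ) ∉ K ∧
      (∀ ζ ∈ K, ∀ t : ℝ, 0 < t → (t : ℂ) * ζ ∈ K) ∧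
      (∀ t : ℝ, 0 < t → (t : ℂ) * (a - z₀) ∈ K) ∧
      0 < r ∧
      (∀ z ∈ U₀, ∀ ζ ∈ K, ‖ζ‖ < r →
        (z + ζ, conj z - conj ζ) ∈ OmegaA a r₁ r₂) := by
  have hr₂pos : 0 < r₂ := h1.trans h12
  -- basic facts about z₀
  have hz₀Ann : z₀ ∈ Ann a r₁ r₂ := interior_subset hz₀
  set d₀ := ‖z₀ - a‖ with hd₀def
  have hd₀r₁ : r₁ ≤ d₀ := hz₀Ann.1
  have hd₀pos : 0 < d₀ := h1.trans_le hd₀r₁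
  obtain ⟨δ, hδpos, hδ⟩ : ∃ δ > 0, ball z₀ δ ⊆ Ann a r₁ r₂ := by
    rw [mem_interior_iff_mem_nhds] at hz₀
    exact Metric.mem_nhds_iff.mp hz₀
  have habs_unit : ‖(d₀ : ℂ)⁻¹ * (z₀ - a)‖ = 1 := by
    rw [norm_mul, norm_inv, Complex.norm_real, Real.norm_eq_abs, abs_of_pos hd₀pos]
    field_simp
    exact hd₀def.symm
  have hlt₂ : d₀ < r₂ := by
    set w := z₀ + ((δ/2 : ℝ) : ℂ) * ((d₀ : ℂ)⁻¹ * (z₀ - a)) with hwdef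
    have hwball : w ∈ ball z₀ δ := by
      rw [mem_ball, Complex.dist_eq]
      have : w - z₀ = ((δ/2 : ℝ) : ℂ) * ((d₀ : ℂ)⁻¹ * (z₀ - a)) := by rw [hwdef]; ring
      rw [this, norm_mul, habs_unit, Complex.norm_real, Real.norm_eq_abs, abs_of_pos (by linarith)]
      linarith
    have hwa : ‖w - a‖ = d₀ + δ/2 := by
      have : w - a = (z₀ - a) + ((δ/2 : ℝ) : ℂ) * ((d₀ : ℂ)⁻¹ * (z₀ - a)) := by
        rw [hwdef]; ring
      rw [this]
      have h2 : (z₀ - a) + ((δ/2 : ℝ) : ℂ) * ((d₀ : ℂ)⁻¹ * (z₀ - a))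
          = ((1 + δ/2 * d₀⁻¹ : ℝ) : ℂ) * (z₀ - a) := by push_cast; ring
      rw [h2, norm_mul, Complex.norm_real, Real.norm_eq_abs, ← hd₀def,
        abs_of_pos (by positivity)]
      field_simp
    have := (hδ hwball).2
    rw [hwa] at this; linarith
  have hlt₁ : r₁ < d₀ := by
    set μ := min (δ/2) (d₀/2) with hμdef
    have hμpos : 0 < μ := lt_min (by linarith) (by linarith)
    have hμδ : μ < δ := (min_le_left _ _).trans_lt (by linarith)
    have hμd₀ : μ ≤ d₀/2 := min_le_right _ _
    set w := z₀ - ((μ : ℝ) : ℂ) * ((d₀ : ℂ)⁻¹ * (z₀ - a)) with hwdef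
    have hwball : w ∈ ball z₀ δ := by
      rw [mem_ball, Complex.dist_eq]
      have : w - z₀ = -(((μ : ℝ) : ℂ) * ((d₀ : ℂ)⁻¹ * (z₀ - a))) := by rw [hwdef]; ring
      rw [this, norm_neg, norm_mul, habs_unit, Complex.norm_real, Real.norm_eq_abs, abs_of_pos hμpos]
      linarith
    have hwa : ‖w - a‖ = d₀ - μ := by
      have h2 : w - a = ((1 - μ * d₀⁻¹ : ℝ) : ℂ) * (z₀ - a) := by
        rw [hwdef]; push_cast; ring
      rw [h2, norm_mul, Complex.norm_real, Real.norm_eq_abs, ← hd₀def]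
      have h3 : (0:ℝ) ≤ 1 - μ * d₀⁻¹ := by
        rw [sub_nonneg]
        calc μ * d₀⁻¹ ≤ (d₀/2) * d₀⁻¹ := by
              apply mul_le_mul_of_nonneg_right hμd₀ (by positivity)
          _ = 1/2 := by field_simp
          _ ≤ 1 := by norm_num
      rw [_root_.abs_of_nonneg h3]
      field_simp
    have := (hδ hwball).1
    rw [hwa] at this; linarith
  -- the constants
  set ε := min (d₀ - r₁) (r₂ - d₀) / 10 with hεdef
  have hεpos : 0 < ε := by
    apply div_pos _ (by norm_num)
    exact lt_min (by linarith) (by linarith)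
  have hε₁ : r₁ + 10*ε ≤ d₀ := by
    have := min_le_left (d₀ - r₁) (r₂ - d₀)
    rw [hεdef]; linarith
  have hε₂ : d₀ + 10*ε ≤ r₂ := by
    have := min_le_right (d₀ - r₁) (r₂ - d₀)
    rw [hεdef]; linarith
  set η := ε / (2*r₂) with hηdef
  have hηpos : 0 < η := by positivity
  have hη1 : η ≤ 1 := by
    rw [hηdef, div_le_one (by positivity)]
    linarith
  set e : ℂ := (d₀ : ℂ)⁻¹ * (a - z₀) with hedef
  have habse : ‖e‖ = 1 := by
    rw [hedef, norm_mul, norm_inv, Complex.norm_real, Real.norm_eq_abs, abs_of_pos hd₀pos,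
      norm_sub_rev]
    field_simp
    exact hd₀def.symm
  have heconj : e * conj e = 1 := by
    rw [Complex.mul_conj, ← Complex.sq_norm, habse]
    norm_num
  set K : Set ℂ := {ζ : ℂ | (ζ * conj e).im - η * (ζ * conj e).re < 0 ∧
      -(ζ * conj e).im - η * (ζ * conj e).re < 0} with hKdef
  -- membership in K gives the angular estimate
  have hKmem : ∀ ζ ∈ K, |(ζ * conj e).im| < η * (ζ * conj e).re := by
    intro ζ hζ
    rw [abs_lt]
    exact ⟨by linarith [hζ.2], by linarith [hζ.1]⟩
  have hKre : ∀ ζ ∈ K, 0 < (ζ * conj e).re := by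
    intro ζ hζ
    have := hKmem ζ hζ
    have h0 : (0:ℝ) ≤ |(ζ * conj e).im| := abs_nonneg _
    nlinarith
  -- scaling property
  have hKcone : ∀ ζ ∈ K, ∀ t : ℝ, 0 < t → (t : ℂ) * ζ ∈ K := by
    intro ζ hζ t ht
    have him : (((t:ℂ) * ζ) * conj e).im = t * (ζ * conj e).im := by
      rw [mul_assoc, Complex.mul_im, Complex.ofReal_re, Complex.ofReal_im]; ring
    have hre : (((t:ℂ) * ζ) * conj e).re = t * (ζ * conj e).re := by
      rw [mul_assoc, Complex.mul_re, Complex.ofReal_re, Complex.ofReal_im]; ring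
    constructor
    · rw [him, hre]; nlinarith [hζ.1]
    · rw [him, hre]; nlinarith [hζ.2]
  have hKaz : ∀ t : ℝ, 0 < t → (t : ℂ) * (a - z₀) ∈ K := by
    have haz : (a - z₀) ∈ K := by
      have hd₀ne : (d₀ : ℂ) ≠ 0 := Complex.ofReal_ne_zero.mpr (ne_of_gt hd₀pos)
      have h0 : (a - z₀) * conj (a - z₀) = ((d₀^2 : ℝ) : ℂ) := by
        rw [Complex.mul_conj, Complex.normSq_eq_norm_sq, norm_sub_rev]
      have h : (a - z₀) * conj e = ((d₀ : ℝ) : ℂ) := by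
        rw [hedef, map_mul, map_inv₀, Complex.conj_ofReal,
          mul_comm ((d₀:ℂ))⁻¹, ← mul_assoc, h0]
        push_cast
        field_simp
      constructor
      · show ((a - z₀) * conj e).im - η * ((a - z₀) * conj e).re < 0
        rw [h]
        simp only [Complex.ofReal_re, Complex.ofReal_im]
        nlinarith
      · show -((a - z₀) * conj e).im - η * ((a - z₀) * conj e).re < 0
        rw [h]
        simp only [Complex.ofReal_re, Complex.ofReal_im]
        nlinarith
    intro t ht
    exact hKcone _ haz t ht
  -- the radius r
  set r := min (Real.sqrt (ε * r₁)) r₁ with hrdef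
  have hrpos : 0 < r := lt_min (Real.sqrt_pos.mpr (mul_pos hεpos h1)) h1
  have hr2 : r^2 ≤ ε * r₁ := by
    have h1' := min_le_left (Real.sqrt (ε * r₁)) r₁
    have h2' := Real.sq_sqrt (le_of_lt (mul_pos hεpos h1))
    nlinarith [Real.sqrt_nonneg (ε * r₁), hrpos.le]
  have hrr₁ : r ≤ r₁ := min_le_right _ _
  -- openness of K
  have hKopen : IsOpen K := by
    have c1 : Continuous fun ζ : ℂ => (ζ * conj e).im - η * (ζ * conj e).re := by
      fun_prop
    have c2 : Continuous fun ζ : ℂ => -(ζ * conj e).im - η * (ζ * conj e).re := by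
      fun_prop
    rw [hKdef, Set.setOf_and]
    exact (isOpen_lt c1 continuous_const).inter (isOpen_lt c2 continuous_const)
  -- convexity of K
  have hKconv : Convex ℝ K := by
    have hlin1 : IsLinearMap ℝ (fun ζ : ℂ => (ζ * conj e).im - η * (ζ * conj e).re) := by
      constructor
      · intro x y; simp [add_mul]; ring
      · intro c x
        simp only [smul_eq_mul, Complex.real_smul, mul_assoc, Complex.mul_im, Complex.mul_re,
          Complex.ofReal_re, Complex.ofReal_im]
        ring
    have hlin2 : IsLinearMap ℝ (fun ζ : ℂ => -(ζ * conj e).im - η * (ζ * conj e).re) := by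
      constructor
      · intro x y; simp [add_mul]; ring
      · intro c x
        simp only [smul_eq_mul, Complex.real_smul, mul_assoc, Complex.mul_im, Complex.mul_re,
          Complex.ofReal_re, Complex.ofReal_im]
        ring
    rw [hKdef, Set.setOf_and]
    exact (convex_halfSpace_lt hlin1 0).inter (convex_halfSpace_lt hlin2 0)
  have hK0 : (0 : ℂ) ∉ K := by
    intro h
    have := hKre 0 h
    simp at this
  have hKne : K.Nonempty := ⟨a - z₀, by simpa using hKaz 1 one_pos⟩
  refine ⟨ball z₀ ε, K, r, isOpen_ball, mem_ball_self hεpos, hKopen, hKconv, hKne, hK0,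
    hKcone, hKaz, hrpos, ?_⟩
  -- open annulus sits inside the interior of the closed one
  have hSsub : {x : ℂ | r₁ < ‖x - a‖ ∧ ‖x - a‖ < r₂}
      ⊆ interior (Ann a r₁ r₂) := by
    apply interior_maximal
    · intro x hx; exact ⟨hx.1.le, hx.2.le⟩
    · have hcont : Continuous fun x : ℂ => ‖x - a‖ :=
        continuous_norm.comp (continuous_sub_right a)
      rw [Set.setOf_and]
      exact (isOpen_lt continuous_const hcont).inter (isOpen_lt hcont continuous_const)
  -- the main geometric estimate
  intro z hz ζ hζK hζr
  have hζre := hKre ζ hζK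
  have hζne : ζ ≠ 0 := by
    intro h; rw [h] at hζre; simp at hζre
  set m := ‖ζ‖ with hmdef
  have hmpos : 0 < m := norm_pos_iff.mpr hζne
  set d := ‖z - a‖ with hddef
  have hzz₀ : ‖z - z₀‖ < ε := by
    rw [mem_ball, Complex.dist_eq] at hz; exact hz
  have hdd₀ : |d₀ - d| ≤ ε := by
    have h := abs_norm_sub_norm_le (z₀ - a) (z - a)
    have h2 : (z₀ - a) - (z - a) = -(z - z₀) := by ring
    rw [h2, norm_neg] at h
    exact h.trans hzz₀.le
  have hd_lb : d₀ - ε ≤ d := by have := abs_le.mp hdd₀; linarith [this.2]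
  have hd_ub : d ≤ d₀ + ε := by have := abs_le.mp hdd₀; linarith [this.1]
  have hdr₂ : d ≤ r₂ := by linarith
  have hmr : m < r := hζr
  have hmd : m < d := by
    have : m < r₁ := hmr.trans_le hrr₁
    linarith
  -- the angular estimate
  set w := ζ * conj e with hwdef
  have habsw : ‖w‖ = m := by
    rw [hwdef, norm_mul, Complex.norm_conj, habse, mul_one, hmdef]
  have hre_le : w.re ≤ m := by rw [← habsw]; exact Complex.re_le_norm w
  have hre_pos : 0 < w.re := hζre
  have him : |w.im| < η * w.re := hKmem ζ hζK
  have hnormw : w.re^2 + w.im^2 = m^2 := by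
    rw [← habsw, Complex.sq_norm, Complex.normSq_apply]; ring
  have him2 : w.im^2 ≤ η^2 * w.re^2 := by
    calc w.im^2 = |w.im|^2 := (_root_.sq_abs w.im).symm
      _ ≤ (η*w.re)^2 := pow_le_pow_left₀ (abs_nonneg _) him.le 2
      _ = η^2*w.re^2 := by ring
  have hmw : m - w.re ≤ η^2 * m := by
    have e1 : m*(m - w.re) ≤ m^2 - w.re^2 := by
      nlinarith only [mul_nonneg hre_pos.le (sub_nonneg.mpr hre_le)]
    have e2 : m^2 - w.re^2 = w.im^2 := by linarith only [hnormw]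
    have e3 : η^2*w.re^2 ≤ η^2*m^2 := by
      have := pow_le_pow_left₀ hre_pos.le hre_le 2
      nlinarith only [this, sq_nonneg η]
    have hstep : m * (m - w.re) ≤ m * (η^2 * m) := by
      nlinarith only [e1, e2, e3, him2]
    exact le_of_mul_le_mul_left hstep hmpos
  have hkey : ‖ζ - (m:ℂ) * e‖ ≤ 2*η*m := by
    have h1' : (ζ - (m:ℂ)*e) * conj e = w - (m:ℂ) := by
      rw [sub_mul, mul_assoc, heconj, mul_one, hwdef]
    have h2' : ‖ζ - (m:ℂ)*e‖ = ‖w - (m:ℂ)‖ := by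
      rw [← h1', norm_mul, Complex.norm_conj, habse, mul_one]
    have h3' : Complex.normSq (w - (m:ℂ)) ≤ (2*η*m)^2 := by
      rw [Complex.normSq_apply]
      simp only [Complex.sub_re, Complex.sub_im, Complex.ofReal_re, Complex.ofReal_im]
      have hA : (m - w.re)^2 ≤ η^2*m^2 := by
        have h0 : 0 ≤ m - w.re := sub_nonneg.mpr hre_le
        have h1' : (m - w.re)*(m - w.re) ≤ (η^2*m)*(η^2*m) :=
          mul_le_mul hmw hmw h0 (by positivity)
        have hη2 : η^2*(η^2*m^2) ≤ 1*(η^2*m^2) := by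
          apply mul_le_mul_of_nonneg_right _ (by positivity)
          nlinarith only [hη1, hηpos.le]
        nlinarith only [h1', hη2]
      have hB : w.im^2 ≤ η^2*m^2 := by
        have h2' : η^2*w.re^2 ≤ η^2*m^2 := by
          have := pow_le_pow_left₀ hre_pos.le hre_le 2
          nlinarith only [this, sq_nonneg η]
        exact him2.trans h2'
      nlinarith only [hA, hB]
    rw [h2', Complex.norm_def]
    have h4' := Real.sqrt_le_sqrt h3'
    rwa [Real.sqrt_sq (by positivity)] at h4'
  -- the circle parameters
  set c := d / m with hcdef
  have hc1 : 1 < c := (one_lt_div hmpos).mpr hmd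
  have hmne : m ≠ 0 := ne_of_gt hmpos
  have hcm : c * m = d := by rw [hcdef]; field_simp
  set ρ := Real.sqrt (d^2 - m^2) with hρdef
  have hdm2 : 0 < d^2 - m^2 := by
    nlinarith only [mul_self_lt_mul_self hmpos.le hmd]
  have hρsq : ρ^2 = d^2 - m^2 := Real.sq_sqrt hdm2.le
  have hρpos : 0 < ρ := Real.sqrt_pos.mpr hdm2
  have hρd : ρ ≤ d := by
    rw [hρdef]
    calc Real.sqrt (d^2 - m^2) ≤ Real.sqrt (d^2) :=
        Real.sqrt_le_sqrt (by nlinarith only [sq_nonneg m])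
      _ = d := Real.sqrt_sq (norm_nonneg _)
  have hd₀ne : (d₀:ℝ) ≠ 0 := ne_of_gt hd₀pos
  -- the centre is close to a
  have hba : ‖(z + ((c:ℝ):ℂ)*ζ) - a‖ ≤ 3*ε := by
    have hsplit : (z + ((c:ℝ):ℂ)*ζ) - a
        = ((z - z₀) + ((1 - d/d₀ : ℝ):ℂ)*(z₀ - a)) + ((c:ℝ):ℂ)*(ζ - (m:ℂ)*e) := by
      have hmne' : (m:ℂ) ≠ 0 := Complex.ofReal_ne_zero.mpr hmne
      have hd₀ne' : (d₀:ℂ) ≠ 0 := Complex.ofReal_ne_zero.mpr hd₀ne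
      rw [hedef, hcdef]
      push_cast
      field_simp
      ring
    have ht1 : ‖((1 - d/d₀ : ℝ):ℂ)*(z₀ - a)‖ ≤ ε := by
      rw [norm_mul, Complex.norm_real, Real.norm_eq_abs, ← hd₀def]
      have he1 : (1 - d/d₀ : ℝ) = (d₀ - d)/d₀ := by field_simp
      rw [he1, abs_div, _root_.abs_of_pos hd₀pos, div_mul_cancel₀ _ hd₀ne]
      exact hdd₀
    have ht2 : ‖((c:ℝ):ℂ)*(ζ - (m:ℂ)*e)‖ ≤ ε := by
      rw [norm_mul, Complex.norm_real, Real.norm_eq_abs, _root_.abs_of_pos (by linarith : (0:ℝ) < c)]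
      calc c * ‖ζ - (m:ℂ)*e‖ ≤ c * (2*η*m) := by
            apply mul_le_mul_of_nonneg_left hkey (by linarith)
        _ = 2*η*d := by rw [← hcm]; ring
        _ ≤ 2*η*r₂ := by
            have := mul_le_mul_of_nonneg_left hdr₂ (by positivity : (0:ℝ) ≤ 2*η)
            linarith only [this]
        _ = ε := by
            rw [hηdef]
            field_simp
    calc ‖(z + ((c:ℝ):ℂ)*ζ) - a‖
        ≤ ‖(z - z₀) + ((1 - d/d₀ : ℝ):ℂ)*(z₀ - a)‖
          + ‖((c:ℝ):ℂ)*(ζ - (m:ℂ)*e)‖ := by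
          rw [hsplit]; exact norm_add_le _ _
      _ ≤ (‖z - z₀‖ + ‖((1 - d/d₀ : ℝ):ℂ)*(z₀ - a)‖)
          + ‖((c:ℝ):ℂ)*(ζ - (m:ℂ)*e)‖ := by
          have := norm_add_le (z - z₀) (((1 - d/d₀ : ℝ):ℂ)*(z₀ - a))
          linarith
      _ ≤ (ε + ε) + ε := by linarith [hzz₀.le, ht1, ht2]
      _ = 3*ε := by ring
  have hm2 : m^2 ≤ ε * r₁ := by
    have : m*m ≤ r*r := mul_self_le_mul_self hmpos.le hmr.le
    nlinarith only [this, hr2]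
  have hρ_lb : r₁ + 3*ε < ρ := by
    rw [hρdef]
    rw [show r₁ + 3*ε = r₁ + 3*ε from rfl]
    apply (Real.lt_sqrt (by positivity)).mpr
    have hd9 : r₁ + 9*ε ≤ d := by linarith only [hd_lb, hε₁]
    have hd2 : (r₁ + 9*ε)^2 ≤ d^2 := pow_le_pow_left₀ (by positivity) hd9 2
    nlinarith only [hd2, hm2, mul_pos hεpos h1, sq_nonneg ε, hεpos, h1]
  refine ⟨z + ((c:ℝ):ℂ)*ζ, ρ, hρpos, ?_, by linarith, ?_, ?_, ?_⟩
  · -- sphere subset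
    intro x hx
    rw [mem_sphere, Complex.dist_eq] at hx
    have htri1 : ‖x - (z + ((c:ℝ):ℂ)*ζ)‖
        ≤ ‖x - a‖ + ‖(z + ((c:ℝ):ℂ)*ζ) - a‖ := by
      have := norm_sub_le_norm_sub_add_norm_sub x a (z + ((c:ℝ):ℂ)*ζ)
      rw [norm_sub_rev a] at this
      exact this
    have htri2 : ‖x - a‖
        ≤ ‖x - (z + ((c:ℝ):ℂ)*ζ)‖ + ‖(z + ((c:ℝ):ℂ)*ζ) - a‖ :=
      norm_sub_le_norm_sub_add_norm_sub x (z + ((c:ℝ):ℂ)*ζ) a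
    rw [hx] at htri1 htri2
    exact hSsub ⟨by linarith, by linarith⟩
  · -- the defining equation of Λ
    show ((z + ζ) - (z + ((c:ℝ):ℂ)*ζ)) * ((conj z - conj ζ) - conj (z + ((c:ℝ):ℂ)*ζ))
        = ((ρ:ℝ):ℂ)^2
    have hζζ : ζ * conj ζ = ((m:ℝ):ℂ)^2 := by
      rw [Complex.mul_conj, Complex.normSq_eq_norm_sq, ← hmdef]
      push_cast
      ring
    have hcρ : ((c:ℝ):ℂ)^2*((m:ℝ):ℂ)^2 - ((m:ℝ):ℂ)^2 = ((ρ:ℝ):ℂ)^2 := by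
      have hℝ : c^2*m^2 - m^2 = ρ^2 := by
        rw [hρsq, hcdef]; field_simp
      have := congrArg (fun x : ℝ => (x:ℂ)) hℝ
      push_cast at this
      exact this
    have hconjb : conj (z + ((c:ℝ):ℂ)*ζ) = conj z + ((c:ℝ):ℂ)*conj ζ := by
      simp [map_add, map_mul, Complex.conj_ofReal]
    rw [hconjb]
    linear_combination (((c:ℝ):ℂ)^2 - 1) * hζζ + hcρ
  · -- positivity of |p₁ - b|
    show 0 < ‖(z + ζ) - (z + ((c:ℝ):ℂ)*ζ)‖
    have hfst : (z + ζ) - (z + ((c:ℝ):ℂ)*ζ) = ((1-c:ℝ):ℂ) * ζ := by push_cast; ring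
    rw [hfst, norm_mul, Complex.norm_real, Real.norm_eq_abs, _root_.abs_of_neg (by linarith : (1-c:ℝ) < 0)]
    rw [← hmdef]
    nlinarith only [hc1, hmpos]
  · -- |p₁ - b| < ρ
    show ‖(z + ζ) - (z + ((c:ℝ):ℂ)*ζ)‖ < ρ
    have hfst : (z + ζ) - (z + ((c:ℝ):ℂ)*ζ) = ((1-c:ℝ):ℂ) * ζ := by push_cast; ring
    rw [hfst, norm_mul, Complex.norm_real, Real.norm_eq_abs, _root_.abs_of_neg (by linarith : (1-c:ℝ) < 0),
      ← hmdef]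
    have hdm : -(1-c) * m = d - m := by rw [← hcm]; ring
    rw [hdm, hρdef]
    apply (Real.lt_sqrt (by linarith)).mpr
    nlinarith only [hmpos, hmd]
end

section
/- For all r₁, r₂ with 0 < r₁ < r₂ there exist δ > 0 and M > 0 such that {(z,w) ∈ ℂ² : |z| ≤ δ and |w| ≥ M} ⊆ Ω(A(0,r₁,r₂)). -/
open Complex Metric ComplexConjugate

lemma stmt8_aux (r e δ S B : ℝ) (hr : 0 < r) (he : 0 < e) (her : e < r)
    (hδ : δ = e/4) (hs2r : 2*r ≤ S) (hse : 16*r^2 ≤ S*e)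
    (hBD : B * (S^2 - r^2) ≤ δ*S^2 + r^2*(S+δ)) (hB0 : 0 ≤ B) :
    B*(S^2-r^2) < r*S^2 ∧ ((r-e)+B)*(S^2-r^2) < r*S^2 ∧
      B*(S^2-r^2) + r*S^2 < (r+e)*(S^2-r^2) := by
  subst hδ
  have hS0 : 0 < S := by linarith
  have p1 : r*S^2 ≥ 2*(r^2*S) := by nlinarith [mul_nonneg (by linarith : (0:ℝ) ≤ S - 2*r) (by positivity : (0:ℝ) ≤ r*S)]
  have p2 : e*S^2 ≥ 16*(r^2*S) := by nlinarith [mul_nonneg (by linarith : (0:ℝ) ≤ S*e - 16*r^2) hS0.le]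
  have p3 : r^2*S ≥ 2*r^3 := by nlinarith [mul_nonneg (by linarith : (0:ℝ) ≤ S - 2*r) (sq_nonneg r)]
  have p4 : e*r^2 ≤ r^3 := by nlinarith [mul_le_mul_of_nonneg_right her.le (sq_nonneg r)]
  have p5 : e*S^2 ≤ r*S^2 := mul_le_mul_of_nonneg_right her.le (sq_nonneg S)
  have hr3 : 0 < r^3 := by positivity
  refine ⟨by linarith, by nlinarith, by nlinarith⟩

theorem stmt8 (r₁ r₂ : ℝ) (h1 : 0 < r₁) (h12 : r₁ < r₂) :
    ∃ (δ M : ℝ), 0 < δ ∧ 0 < M ∧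
      ∀ z w : ℂ, ‖z‖ ≤ δ → M ≤ ‖w‖ →
        (z, w) ∈ OmegaA 0 r₁ r₂ := by
  set e : ℝ := (r₂ - r₁)/2 with he_def
  set r : ℝ := (r₁ + r₂)/2 with hr_def
  have he : 0 < e := by rw [he_def]; linarith
  have hr : 0 < r := by rw [hr_def]; linarith
  have her : e < r := by rw [he_def, hr_def]; linarith
  have hr1 : r₁ = r - e := by rw [he_def, hr_def]; ring
  have hr2 : r₂ = r + e := by rw [he_def, hr_def]; ring
  set δ : ℝ := e/4 with hδ_def
  have hδ : 0 < δ := by positivity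
  refine ⟨δ, 2*r + 16*r^2/e + δ, hδ, by positivity, ?_⟩
  intro z w hz hw
  set S : ℝ := ‖w - conj z‖ with hS_def
  have hzc : ‖conj z‖ ≤ δ := by rwa [Complex.norm_conj]
  have hS1 : 2*r + 16*r^2/e ≤ S := by
    have := norm_sub_norm_le w (conj z)
    rw [hS_def]; linarith
  have hs2r : 2*r ≤ S := by
    have : 0 ≤ 16*r^2/e := by positivity
    linarith
  have hse : 16*r^2 ≤ S*e := by
    have h' : 16*r^2/e ≤ S := by linarith
    calc 16*r^2 = (16*r^2/e)*e := by field_simp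
    _ ≤ S*e := by nlinarith
  have hS0 : 0 < S := by linarith
  have hD : 0 < S^2 - r^2 := by nlinarith
  have hwS : ‖w‖ ≤ S + δ := by
    have := norm_sub_norm_le w (conj z)
    have h2 : ‖w‖ - ‖conj z‖ ≤ S := by
      simpa [hS_def] using this
    linarith
  set ρ : ℝ := r * S^2 / (S^2 - r^2) with hρ_def
  have hρpos : 0 < ρ := by rw [hρ_def]; positivity
  have hρD : ρ * (S^2 - r^2) = r * S^2 := by
    rw [hρ_def]; field_simp
  set b : ℂ := (z * (S:ℂ)^2 - (r:ℂ)^2 * conj w) / ((S:ℂ)^2 - (r:ℂ)^2) with hb_def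
  have hDcast : ((S:ℂ)^2 - (r:ℂ)^2) = ((S^2 - r^2 : ℝ) : ℂ) := by push_cast; ring
  have hDc : ((S:ℂ)^2 - (r:ℂ)^2) ≠ 0 := by
    rw [hDcast]
    exact_mod_cast hD.ne'
  -- key algebraic identities
  have hzb : z - b = (r:ℂ)^2 * (conj w - z) / ((S:ℂ)^2 - (r:ℂ)^2) := by
    rw [hb_def]; field_simp; ring
  have hcb : conj b = (conj z * (S:ℂ)^2 - (r:ℂ)^2 * w) / ((S:ℂ)^2 - (r:ℂ)^2) := by
    rw [hb_def, map_div₀, map_sub, map_mul, map_mul, map_pow, map_pow, map_sub,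
      map_pow, map_pow, Complex.conj_conj, Complex.conj_ofReal, Complex.conj_ofReal]
  have hwb : w - conj b = (S:ℂ)^2 * (w - conj z) / ((S:ℂ)^2 - (r:ℂ)^2) := by
    rw [hcb]; field_simp; ring
  have hkey : (conj w - z) * (w - conj z) = ((S:ℂ))^2 := by
    have h1' : conj (w - conj z) = conj w - z := by
      rw [map_sub, Complex.conj_conj]
    calc (conj w - z) * (w - conj z) = conj (w - conj z) * (w - conj z) := by rw [h1']
    _ = (Complex.normSq (w - conj z) : ℂ) := by rw [Complex.normSq_eq_conj_mul_self]
    _ = ((S:ℂ))^2 := by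
        rw [← Complex.sq_norm, ← hS_def]; push_cast; ring
  have hprod : (z - b) * (w - conj b) = (ρ:ℂ)^2 := by
    rw [hzb, hwb, div_mul_div_comm, mul_mul_mul_comm, hkey, hρ_def]
    push_cast
    field_simp
  -- abs (z - b)
  have habsD : ‖(S:ℂ)^2 - (r:ℂ)^2‖ = S^2 - r^2 := by
    rw [hDcast, Complex.norm_real, Real.norm_eq_abs, abs_of_pos hD]
  have habszb : ‖z - b‖ = r^2 * S / (S^2 - r^2) := by
    rw [hzb, norm_div, norm_mul, habsD]
    congr 1
    have h1' : ‖(r:ℂ)^2‖ = r^2 := by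
      rw [norm_pow, Complex.norm_real, Real.norm_eq_abs, abs_of_pos hr]
    have h2' : ‖conj w - z‖ = S := by
      have : conj w - z = conj (w - conj z) := by rw [map_sub, Complex.conj_conj]
      rw [this, Complex.norm_conj, ← hS_def]
    rw [h1', h2']
  -- bound on abs b
  have habsb : ‖b‖ ≤ (δ * S^2 + r^2 * (S + δ)) / (S^2 - r^2) := by
    rw [hb_def, norm_div, habsD]
    have hnum : ‖z * (S:ℂ)^2 - (r:ℂ)^2 * conj w‖ ≤ δ * S^2 + r^2 * (S + δ) := by
      have h1' : ‖z * (S:ℂ)^2 - (r:ℂ)^2 * conj w‖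
          ≤ ‖z * (S:ℂ)^2‖ + ‖(r:ℂ)^2 * conj w‖ :=
        norm_sub_le _ _
      have h2' : ‖z * (S:ℂ)^2‖ = ‖z‖ * S^2 := by
        rw [norm_mul, norm_pow, Complex.norm_real, Real.norm_eq_abs, abs_of_pos hS0]
      have h3' : ‖(r:ℂ)^2 * conj w‖ = r^2 * ‖w‖ := by
        rw [norm_mul, norm_pow, Complex.norm_real, Real.norm_eq_abs, abs_of_pos hr, Complex.norm_conj]
      rw [h2', h3'] at h1'
      have h4' : ‖z‖ * S^2 ≤ δ * S^2 :=
        mul_le_mul_of_nonneg_right hz (sq_nonneg S)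
      have h5' : r^2 * ‖w‖ ≤ r^2 * (S + δ) :=
        mul_le_mul_of_nonneg_left hwS (sq_nonneg r)
      linarith
    exact div_le_div_of_nonneg_right hnum hD.le
  set B : ℝ := ‖b‖ with hB_def
  have hB0 : 0 ≤ B := norm_nonneg b
  have hBD : B * (S^2 - r^2) ≤ δ * S^2 + r^2 * (S + δ) := by
    rw [← le_div_iff₀ hD]; exact habsb
  obtain ⟨q1, q2, q3⟩ := stmt8_aux r e δ S B hr he her hδ_def hs2r hse hBD hB0
  have hkey1 : B < ρ := by
    have h' : B * (S^2 - r^2) < ρ * (S^2 - r^2) := by rw [hρD]; exact q1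
    exact lt_of_mul_lt_mul_right h' hD.le
  have hkey2 : r₁ + B < ρ := by
    have h' : (r₁ + B) * (S^2 - r^2) < ρ * (S^2 - r^2) := by
      rw [hρD, hr1]; exact q2
    exact lt_of_mul_lt_mul_right h' hD.le
  have hkey3 : ρ + B < r₂ := by
    have h' : (ρ + B) * (S^2 - r^2) < r₂ * (S^2 - r^2) := by
      rw [add_mul, hρD]
      calc r * S^2 + B * (S^2 - r^2) = B*(S^2-r^2) + r*S^2 := by ring
      _ < (r+e)*(S^2-r^2) := q3
      _ = r₂ * (S^2 - r^2) := by rw [hr2]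
    exact lt_of_mul_lt_mul_right h' hD.le
  refine ⟨b, ρ, hρpos, ?_, ?_, ?_⟩
  · -- sphere subset
    intro ζ hζ
    have hζ' : ‖ζ - b‖ = ρ := by
      simpa [Complex.dist_eq] using mem_sphere.mp hζ
    have hlow : r₁ < ‖ζ‖ := by
      have h' := norm_sub_le ζ b
      rw [hζ'] at h'
      linarith
    have hhigh : ‖ζ‖ < r₂ := by
      have h' := norm_sub_norm_le ζ b
      rw [hζ'] at h'
      linarith
    have hopen : IsOpen {ξ : ℂ | r₁ < ‖ξ‖ ∧ ‖ξ‖ < r₂} := by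
      have heq : {ξ : ℂ | r₁ < ‖ξ‖ ∧ ‖ξ‖ < r₂}
          = (fun ξ : ℂ => ‖ξ‖) ⁻¹' (Set.Ioo r₁ r₂) := rfl
      rw [heq]
      exact isOpen_Ioo.preimage continuous_norm
    have hsub : {ξ : ℂ | r₁ < ‖ξ‖ ∧ ‖ξ‖ < r₂} ⊆ Ann 0 r₁ r₂ := by
      intro ξ hξ
      exact ⟨by simpa using hξ.1.le, by simpa using hξ.2.le⟩
    exact interior_maximal hsub hopen ⟨hlow, hhigh⟩
  · simpa using hkey1
  · refine ⟨hprod, ?_, ?_⟩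
    · rw [habszb]; positivity
    · rw [habszb, hρ_def, div_lt_div_iff₀ hD hD]
      apply mul_lt_mul_of_pos_right ?_ hD
      calc r^2*S = (r*S)*r := by ring
      _ < (r*S)*S := by
          apply mul_lt_mul_of_pos_left (by linarith) (by positivity)
      _ = r*S^2 := by ring
end

section
/- The union of the sets Λ_{a,ρ} over all a ∈ ℂ and ρ > 0 with |a| < ρ equals {(z,w) ∈ ℂ² : |w| > |z|}. That is, for (z,w) ∈ ℂ², there exist a ∈ ℂ and ρ > 0 with |a| < ρ and (z,w) ∈ Λ_{a,ρ} if and only if |w| > |z|. -/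
open Complex Metric ComplexConjugate

lemma abs_lt_abs_iff_normSq (z w : ℂ) :
    ‖z‖ < ‖w‖ ↔ Complex.normSq z < Complex.normSq w := by
  rw [Complex.norm_def, Complex.norm_def]
  exact Real.sqrt_lt_sqrt_iff (Complex.normSq_nonneg z)

theorem stmt9 (z w : ℂ) :
    (∃ (a : ℂ) (ρ : ℝ), 0 < ρ ∧ ‖a‖ < ρ ∧ (z, w) ∈ Lam a ρ) ↔
    ‖z‖ < ‖w‖ := by
  constructor
  · rintro ⟨a, ρ, hρ, haρ, heq, h1, h2⟩
    rw [abs_lt_abs_iff_normSq]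
    -- real facts
    have ht0 : 0 < Complex.normSq (z - a) := by
      rw [← Complex.sq_norm]; positivity
    have htρ : Complex.normSq (z - a) < ρ ^ 2 := by
      rw [← Complex.sq_norm]
      exact pow_lt_pow_left₀ h2 (norm_nonneg _) (by norm_num)
    have haρ2 : Complex.normSq a < ρ ^ 2 := by
      rw [← Complex.sq_norm]
      exact pow_lt_pow_left₀ haρ (norm_nonneg _) (by norm_num)
    have h3 : (z - a) * w = ((ρ ^ 2 : ℝ) : ℂ) + (z - a) * conj a := by
      push_cast
      linear_combination heq
    have key : Complex.normSq (z - a) * Complex.normSq w =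
        (ρ ^ 2) ^ 2 + 2 * ρ ^ 2 * ((z - a) * conj a).re +
          Complex.normSq (z - a) * Complex.normSq a := by
      have := congrArg Complex.normSq h3
      rw [Complex.normSq_mul] at this
      rw [this, Complex.normSq_add, Complex.normSq_mul, Complex.normSq_conj,
        Complex.normSq_ofReal]
      simp [Complex.mul_re, Complex.mul_im, ← Complex.ofReal_pow]
      ring
    have hz : Complex.normSq z =
        Complex.normSq (z - a) + Complex.normSq a + 2 * ((z - a) * conj a).re := by
      have h4 : z = (z - a) + a := by ring
      calc Complex.normSq z = Complex.normSq ((z - a) + a) := by rw [← h4]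
        _ = _ := by rw [Complex.normSq_add]
    have hpos : 0 < (ρ ^ 2 - Complex.normSq (z - a)) *
        (ρ ^ 2 - Complex.normSq a + Complex.normSq z) := by
      have := Complex.normSq_nonneg z
      apply mul_pos <;> linarith
    nlinarith [hpos, key, hz, ht0]
  · intro hlt
    have hzw : Complex.normSq z < Complex.normSq w := (abs_lt_abs_iff_normSq z w).mp hlt
    have hnw : 0 < Complex.normSq w := lt_of_le_of_lt (Complex.normSq_nonneg z) hzw
    have hbz : conj w - z ≠ 0 := by
      intro h
      have : z = conj w := by linear_combination -h
      rw [this, Complex.norm_conj] at hlt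
      exact lt_irrefl _ hlt
    have hA : 0 < ‖conj w - z‖ := by
      simpa [norm_pos_iff] using hbz
    set L : ℝ := (Complex.normSq z / Complex.normSq w + 1) / 2 with hLdef
    have hL0 : 0 < L := by
      have : 0 ≤ Complex.normSq z / Complex.normSq w :=
        div_nonneg (Complex.normSq_nonneg z) hnw.le
      positivity
    have hL1 : L < 1 := by
      have : Complex.normSq z / Complex.normSq w < 1 := (div_lt_one hnw).mpr hzw
      rw [hLdef]; linarith
    have h1L : (0 : ℝ) < 1 - L := by linarith
    have hzL : Complex.normSq z < L * Complex.normSq w := by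
      have h : L * Complex.normSq w = (Complex.normSq z + Complex.normSq w) / 2 := by
        rw [hLdef]
        field_simp
      rw [h]
      linarith
    have h1Lc : (1 : ℂ) - (L : ℂ) ≠ 0 := by
      rw [show (1 : ℂ) - (L : ℂ) = ((1 - L : ℝ) : ℂ) by push_cast; ring]
      exact_mod_cast (Complex.ofReal_ne_zero.mpr (ne_of_gt h1L))
    set a : ℂ := (z - (L : ℂ) * conj w) / (1 - (L : ℂ)) with hadef
    set ρ : ℝ := Real.sqrt L * ‖conj w - z‖ / (1 - L) with hρdef
    have hsL : Real.sqrt L * Real.sqrt L = L := Real.mul_self_sqrt hL0.le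
    have hsL0 : 0 < Real.sqrt L := Real.sqrt_pos.mpr hL0
    have hsL1 : Real.sqrt L < 1 := by
      rw [show (1:ℝ) = Real.sqrt 1 by simp]
      exact Real.sqrt_lt_sqrt hL0.le hL1
    have hρ0 : 0 < ρ := by
      rw [hρdef]; positivity
    have hza : z - a = (L : ℂ) * (conj w - z) / (1 - (L : ℂ)) := by
      rw [hadef]
      field_simp
      ring
    have hwa : w - conj a = (w - conj z) / (1 - (L : ℂ)) := by
      rw [hadef]
      rw [map_div₀, map_sub, map_mul, Complex.conj_conj, Complex.conj_ofReal,
        map_sub, map_one, Complex.conj_ofReal]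
      field_simp
      ring
    have hρsq : ρ ^ 2 = L * Complex.normSq (conj w - z) / (1 - L) ^ 2 := by
      rw [hρdef, ← Complex.sq_norm, div_pow, mul_pow, Real.sq_sqrt hL0.le]
    have habsza : ‖z - a‖ = L * ‖conj w - z‖ / (1 - L) := by
      rw [hza, norm_div, norm_mul, Complex.norm_real, Real.norm_eq_abs, abs_of_pos hL0,
        show (1 : ℂ) - (L : ℂ) = ((1 - L : ℝ) : ℂ) by push_cast; ring,
        Complex.norm_real, Real.norm_eq_abs, abs_of_pos h1L]
    refine ⟨a, ρ, hρ0, ?_, ?_, ?_, ?_⟩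
    · -- |a| < ρ
      have hnsa : Complex.normSq a =
          Complex.normSq (z - (L : ℂ) * conj w) / (1 - L) ^ 2 := by
        rw [hadef, Complex.normSq_div,
          show (1 : ℂ) - (L : ℂ) = ((1 - L : ℝ) : ℂ) by push_cast; ring,
          Complex.normSq_ofReal]
        ring_nf
      have hkey : Complex.normSq (z - (L : ℂ) * conj w) <
          L * Complex.normSq (conj w - z) := by
        have hexp : Complex.normSq (z - (L : ℂ) * conj w) -
            L * Complex.normSq (conj w - z)
            = (1 - L) * (Complex.normSq z - L * Complex.normSq w) := by
          simp [Complex.normSq_apply, Complex.sub_re, Complex.sub_im,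
            Complex.mul_re, Complex.mul_im]
          ring
        nlinarith [hexp]
      have hsq : (‖a‖) ^ 2 < ρ ^ 2 := by
        rw [Complex.sq_norm, hρsq, hnsa]
        have h2L : (0:ℝ) < (1 - L) ^ 2 := by positivity
        exact div_lt_div_of_pos_right hkey h2L
      exact lt_of_pow_lt_pow_left₀ 2 hρ0.le hsq
    · -- product equation
      show (z - a) * (w - conj a) = (ρ : ℂ) ^ 2
      rw [hza, hwa]
      have hc : w - conj z = conj (conj w - z) := by
        rw [map_sub, Complex.conj_conj]
      rw [hc]
      have : (L : ℂ) * (conj w - z) / (1 - (L : ℂ)) * (conj (conj w - z) / (1 - (L : ℂ)))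
          = (L : ℂ) * ((conj w - z) * conj (conj w - z)) / (1 - (L : ℂ)) ^ 2 := by
        field_simp
      rw [this, Complex.mul_conj,
        show ((ρ : ℂ)) ^ 2 = ((ρ ^ 2 : ℝ) : ℂ) by push_cast; ring, hρsq]
      push_cast
      field_simp
      try ring
    · -- 0 < |z - a|
      rw [habsza]; positivity
    · -- |z - a| < ρ
      rw [habsza, hρdef]
      have hLs : L < Real.sqrt L := by nlinarith
      have : L * ‖conj w - z‖ < Real.sqrt L * ‖conj w - z‖ :=
        mul_lt_mul_of_pos_right hLs hA
      exact div_lt_div_of_pos_right this h1L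
end

section
/- Let a ∈ ℂ and ρ > 0 with |a| > ρ, and let z ∈ ℂ, z ≠ a. Then |conj(a) + ρ²/(z−a)| = |z| if and only if |z−a| = ρ or |z| = √(|a|²−ρ²). Equivalently, the intersection of the variety V_{a,ρ} = {(z,w) ∈ ℂ² : (z−a)(w−conj(a)) = ρ²} with the set {(z,w) : |z| = |w|} projects onto the union of the two circles bΔ(a,ρ) and bΔ(0,√(|a|²−ρ²)). -/
open Complex Metric ComplexConjugate

private lemma sq_iff {x y : ℝ} (hx : 0 ≤ x) (hy : 0 ≤ y) : x = y ↔ x ^ 2 = y ^ 2 := by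
  constructor
  · intro h; rw [h]
  · intro h; nlinarith

theorem stmt12 (a : ℂ) (ρ : ℝ) (hρ : 0 < ρ) (ha : ρ < ‖a‖)
    (z : ℂ) (hz : z ≠ a) :
    ‖conj a + (ρ : ℂ) ^ 2 / (z - a)‖ = ‖z‖ ↔
    ‖z - a‖ = ρ ∨
      ‖z‖ = Real.sqrt ((‖a‖) ^ 2 - ρ ^ 2) := by
  have hzA : z - a ≠ 0 := sub_ne_zero.mpr hz
  have habs : ‖z - a‖ ≠ 0 := norm_ne_zero_iff.mpr hzA
  have habs' : (0:ℝ) < ‖z - a‖ := lt_of_le_of_ne (by positivity) (Ne.symm habs)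
  have hsub : (0:ℝ) ≤ ‖a‖ ^ 2 - ρ ^ 2 := by nlinarith [hρ.le, ha]
  have key : conj a + (ρ:ℂ)^2 / (z - a) = (conj a * (z - a) + (ρ:ℂ)^2) / (z - a) := by
    field_simp
  rw [key, norm_div, div_eq_iff habs]
  rw [sq_iff (by positivity) (by positivity)]
  have e1 : ‖z - a‖ = ρ ↔ Complex.normSq (z - a) = ρ ^ 2 := by
    rw [sq_iff (by positivity) hρ.le, Complex.sq_norm]
  have e2 : ‖z‖ = Real.sqrt (‖a‖ ^ 2 - ρ ^ 2) ↔
      Complex.normSq z = Complex.normSq a - ρ ^ 2 := by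
    rw [sq_iff (by positivity) (Real.sqrt_nonneg _), Real.sq_sqrt hsub,
      Complex.sq_norm, Complex.sq_norm]
  rw [e1, e2, mul_pow, Complex.sq_norm, Complex.sq_norm, Complex.sq_norm]
  have iden : Complex.normSq (conj a * (z - a) + (ρ:ℂ)^2) -
      Complex.normSq z * Complex.normSq (z - a) =
      -(Complex.normSq (z - a) - ρ ^ 2) * (Complex.normSq z - (Complex.normSq a - ρ ^ 2)) := by
    simp only [Complex.normSq_apply, Complex.add_re, Complex.add_im, Complex.mul_re,
      Complex.mul_im, Complex.sub_re, Complex.sub_im, Complex.conj_re, Complex.conj_im,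
      ← Complex.ofReal_pow, Complex.ofReal_re, Complex.ofReal_im]
    ring
  constructor
  · intro h
    have h0 : (Complex.normSq (z - a) - ρ ^ 2) * (Complex.normSq z - (Complex.normSq a - ρ ^ 2)) = 0 := by
      nlinarith [iden]
    rcases mul_eq_zero.mp h0 with h1 | h1
    · left; linarith
    · right; linarith
  · intro h
    rcases h with h1 | h1
    · have h0 : -(Complex.normSq (z - a) - ρ ^ 2) * (Complex.normSq z - (Complex.normSq a - ρ ^ 2)) = 0 := by
        rw [h1]; ring
      linarith [iden, h0]
    · have h0 : -(Complex.normSq (z - a) - ρ ^ 2) * (Complex.normSq z - (Complex.normSq a - ρ ^ 2)) = 0 := by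
        rw [h1]; ring
      linarith [iden, h0]
end

section
/- Let a ∈ ℂ and ρ > 0 with |a| > ρ, and let z ∈ ℂ, z ≠ a. Then |conj(a) + ρ²/(z−a)| > |z| if and only if exactly one of the following holds: (i) |z| < √(|a|²−ρ²) and |z−a| > ρ, or (ii) |z−a| < ρ and |z| > √(|a|²−ρ²). Equivalently, the point (z, conj(a) + ρ²/(z−a)) lies in Ω = {(z,w) ∈ ℂ² : |w| > |z|} if and only if z lies in D₃(a,ρ) = {z : |z| < √(|a|²−ρ²)} \ {z : |z−a| ≤ ρ} or in D₄(a,ρ) = {z : |z−a| < ρ} \ {z : |z| ≤ √(|a|²−ρ²)}. -/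
open Complex Metric ComplexConjugate

theorem stmt13 (a : ℂ) (ρ : ℝ) (hρ : 0 < ρ) (ha : ρ < ‖a‖)
    (z : ℂ) (hz : z ≠ a) :
    ‖z‖ < ‖conj a + (ρ : ℂ) ^ 2 / (z - a)‖ ↔
    Xor' (‖z‖ < Real.sqrt ((‖a‖) ^ 2 - ρ ^ 2) ∧
            ρ < ‖z - a‖)
         (‖z - a‖ < ρ ∧
            Real.sqrt ((‖a‖) ^ 2 - ρ ^ 2) < ‖z‖) := by
  have hza : z - a ≠ 0 := sub_ne_zero.mpr hz
  set s := ‖z‖ with hs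
  set r := ‖z - a‖ with hrdef
  set A := ‖a‖ with hA
  set W := ‖conj a + (ρ : ℂ) ^ 2 / (z - a)‖ with hW
  have hr : 0 < r := by
    simpa [hrdef] using (norm_pos_iff.mpr hza)
  have hs0 : 0 ≤ s := norm_nonneg z
  have hW0 : 0 ≤ W := norm_nonneg _
  have hAρ : 0 < A ^ 2 - ρ ^ 2 := by nlinarith
  -- key identity
  have hmul : (conj a + (ρ : ℂ) ^ 2 / (z - a)) * (z - a)
      = conj a * (z - a) + (ρ : ℂ) ^ 2 := by
    field_simp
  have key : W ^ 2 * r ^ 2 = (A ^ 2 - ρ ^ 2 - s ^ 2) * (r ^ 2 - ρ ^ 2) + s ^ 2 * r ^ 2 := by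
    have h1 : W * r = ‖conj a * (z - a) + (ρ : ℂ) ^ 2‖ := by
      rw [hW, hrdef, ← norm_mul, hmul]
    have h2 : (W * r) ^ 2 = Complex.normSq (conj a * (z - a) + (ρ : ℂ) ^ 2) := by
      rw [h1, Complex.sq_norm]
    have h3 : s ^ 2 = Complex.normSq z := Complex.sq_norm z
    have h4 : r ^ 2 = Complex.normSq (z - a) := Complex.sq_norm _
    have h5 : A ^ 2 = Complex.normSq a := Complex.sq_norm a
    have h6 : W ^ 2 * r ^ 2 = (W * r) ^ 2 := by ring
    rw [h6, h2, h3, h4, h5]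
    simp only [← Complex.ofReal_pow, Complex.normSq_apply, Complex.mul_re, Complex.mul_im,
      Complex.sub_re, Complex.sub_im, Complex.add_re, Complex.add_im, Complex.conj_re,
      Complex.conj_im, Complex.ofReal_re, Complex.ofReal_im]
    ring
  -- translate sqrt comparisons
  have hsq1 : s < Real.sqrt (A ^ 2 - ρ ^ 2) ↔ s ^ 2 < A ^ 2 - ρ ^ 2 :=
    Real.lt_sqrt hs0
  have hsq2 : Real.sqrt (A ^ 2 - ρ ^ 2) < s ↔ A ^ 2 - ρ ^ 2 < s ^ 2 := by
    rcases eq_or_lt_of_le hs0 with h0 | h0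
    · constructor <;> intro h
      · exact absurd h (not_lt.mpr (by rw [← h0]; exact Real.sqrt_nonneg _))
      · exact absurd h (not_lt.mpr (by nlinarith))
    · exact Real.sqrt_lt' h0
  have hρr1 : ρ < r ↔ ρ ^ 2 < r ^ 2 := by
    constructor <;> intro h <;> nlinarith
  have hρr2 : r < ρ ↔ r ^ 2 < ρ ^ 2 := by
    constructor <;> intro h <;> nlinarith
  have hsW : s < W ↔ s ^ 2 < W ^ 2 := by
    constructor <;> intro h <;> nlinarith
  rw [hsW, hsq1, hsq2, hρr1, hρr2]
  clear_value s r A W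
  clear hmul hz hza hs hrdef hA hW hsq1 hsq2 hρr1 hρr2 hsW
  have hkey2 : s ^ 2 < W ^ 2 ↔ 0 < (A ^ 2 - ρ ^ 2 - s ^ 2) * (r ^ 2 - ρ ^ 2) := by
    constructor <;> intro h
    · nlinarith [mul_pos (sub_pos.mpr h) (pow_pos hr 2)]
    · nlinarith [pow_pos hr 2]
  rw [hkey2]
  set P := A ^ 2 - ρ ^ 2 - s ^ 2 with hP
  set Q := r ^ 2 - ρ ^ 2 with hQ
  clear_value P Q
  clear key hkey2
  constructor
  · intro h
    rcases lt_trichotomy P 0 with hP0 | hP0 | hP0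
    · have hQ0 : Q < 0 := by nlinarith
      right
      refine ⟨⟨by nlinarith, by nlinarith⟩, ?_⟩
      rintro ⟨h1, h2⟩
      nlinarith
    · rw [hP0, zero_mul] at h
      exact absurd h (lt_irrefl 0)
    · have hQ0 : 0 < Q := by nlinarith
      left
      refine ⟨⟨by nlinarith, by nlinarith⟩, ?_⟩
      rintro ⟨h1, h2⟩
      nlinarith
  · rintro (⟨⟨h1, h2⟩, -⟩ | ⟨⟨h1, h2⟩, -⟩)
    · nlinarith
    · nlinarith
end

section
/- Let n ≥ 1 and let a₁,…,aₙ ∈ ℂ, ρ₁,…,ρₙ > 0 with |a_j| > ρ_j for each j. Define f : ℂ → ℂ by f(0) = 0 and f(z) = (z²/conj(z))ⁿ · ∏_{j=1}^{n} ((z−a_j)(conj(z)−conj(a_j)) − ρ_j²) for z ≠ 0. Then f is continuous on ℂ; f extends holomorphically from every circle bΔ(a,ρ) with |a| < ρ (every circle surrounding the origin); f extends holomorphically from every circle bΔ(a,ρ) with |a| = ρ (every circle passing through the origin); f extends holomorphically from each circle bΔ(a_j,ρ_j), 1 ≤ j ≤ n; yet f is not holomorphic on ℂ. -/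
open Complex Metric ComplexConjugate Filter Topology

noncomputable def Qf (n : ℕ) (a : Fin n → ℂ) (ρ : Fin n → ℝ) : ℂ → ℂ :=
  fun z => ∏ j, ((z - a j) * (conj z - conj (a j)) - ((ρ j : ℝ) : ℂ) ^ 2)

noncomputable def Ff (n : ℕ) (a : Fin n → ℂ) (ρ : Fin n → ℝ) : ℂ → ℂ :=
  fun z => (z ^ 2 / conj z) ^ n * Qf n a ρ z

lemma Ff_eq (n : ℕ) (hn : 1 ≤ n) (a : Fin n → ℂ) (ρ : Fin n → ℝ) :
    (fun z : ℂ => if z = 0 then 0 else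
      (z ^ 2 / conj z) ^ n *
        ∏ j, ((z - a j) * (conj z - conj (a j)) - ((ρ j : ℝ) : ℂ) ^ 2)) = Ff n a ρ := by
  funext z
  by_cases hz : z = 0
  · subst hz
    simp [Ff, Qf, zero_pow (by omega : n ≠ 0)]
  · simp [Ff, Qf, hz]

lemma Qf_cont (n : ℕ) (a : Fin n → ℂ) (ρ : Fin n → ℝ) : Continuous (Qf n a ρ) := by
  apply continuous_finset_prod
  intro j _
  exact ((continuous_id.sub continuous_const).mul
    (Complex.continuous_conj.sub continuous_const)).sub continuous_const

lemma Ff_cont (n : ℕ) (a : Fin n → ℂ) (ρ : Fin n → ℝ) : Continuous (Ff n a ρ) := by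
  have habs : ∀ z : ℂ, ‖z ^ 2 / conj z‖ ≤ ‖z‖ := by
    intro z
    by_cases hz : z = 0
    · simp [hz]
    · rw [norm_div, norm_pow, Complex.norm_conj, sq, mul_div_assoc,
        div_self (by simpa using hz), mul_one]
  have hc1 : Continuous fun z : ℂ => z ^ 2 / conj z := by
    rw [continuous_iff_continuousAt]
    intro z
    by_cases hz : z = 0
    · subst hz
      have h0 : (0 : ℂ) ^ 2 / conj 0 = 0 := by simp
      rw [ContinuousAt, h0]
      apply squeeze_zero_norm habs
      simpa using continuous_norm.tendsto (0:ℂ)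
    · exact ((continuous_pow 2).continuousAt).div Complex.continuous_conj.continuousAt
        (by simpa using hz)
  exact (hc1.pow n).mul (Qf_cont n a ρ)

lemma leg4 (n : ℕ) (a : Fin n → ℂ) (ρ : Fin n → ℝ)
    (hρ : ∀ j, 0 < ρ j) (ha : ∀ j, ρ j < ‖a j‖) (j : Fin n) :
    ExtHol (Ff n a ρ) (a j) (ρ j) := by
  refine ⟨fun _ => 0, continuousOn_const, differentiableOn_const 0, ?_⟩
  intro z hz
  rw [mem_sphere_iff_norm] at hz
  have hfac : (z - a j) * (conj z - conj (a j)) - ((ρ j : ℝ) : ℂ) ^ 2 = 0 := by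
    rw [← map_sub, Complex.mul_conj, Complex.normSq_eq_norm_sq, hz]
    push_cast
    ring
  have : Qf n a ρ z = 0 := Finset.prod_eq_zero (Finset.mem_univ j) hfac
  simp [Ff, this]

lemma leg2 (n : ℕ) (a : Fin n → ℂ) (ρ : Fin n → ℝ)
    (c : ℂ) (r : ℝ) (hr : 0 < r) (hcr : ‖c‖ < r) :
    ExtHol (Ff n a ρ) c r := by
  set N : ℂ → ℂ := fun z => conj c * z + (((r : ℝ) : ℂ) ^ 2 - conj c * c) with hN
  have hNne : ∀ z ∈ closedBall c r, N z ≠ 0 := by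
    intro z hz hN0
    rw [mem_closedBall, Complex.dist_eq] at hz
    by_cases hc : c = 0
    · rw [hN, hc] at hN0
      simp at hN0
      exact absurd hN0 (by positivity)
    · have h1 : conj c * (z - c) = -((r : ℂ) ^ 2) := by
        simp only [hN] at hN0
        linear_combination hN0
      have h2 : ‖conj c‖ * ‖z - c‖ = r ^ 2 := by
        rw [← norm_mul, h1]
        simp [abs_of_pos hr, ← Complex.ofReal_pow]
      rw [Complex.norm_conj] at h2
      have hc0 : 0 < ‖c‖ := by
        simpa using norm_pos_iff.mpr hc
      nlinarith [norm_nonneg (z - c)]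
  refine ⟨fun z => z ^ (2 * n) *
      (∏ j, ((z - a j) * (N z - conj (a j) * (z - c)) - ((ρ j : ℝ) : ℂ) ^ 2 * (z - c))) /
      (N z) ^ n, ?_, ?_, ?_⟩
  · intro z hz
    refine (DifferentiableAt.continuousAt (𝕜 := ℂ) ?_).continuousWithinAt
    refine DifferentiableAt.div ?_ ?_ (pow_ne_zero _ (hNne z hz))
    · refine DifferentiableAt.mul (differentiable_pow _ |>.differentiableAt) ?_
      refine DifferentiableAt.fun_finsetProd fun j _ => ?_
      apply DifferentiableAt.sub
      · exact ((differentiable_id.sub_const _) _).mul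
          (((differentiable_const _ |>.mul differentiable_id).add_const _ |>.sub
            ((differentiable_const _).mul (differentiable_id.sub_const _))) _)
      · exact ((differentiable_const _).mul (differentiable_id.sub_const _)) _
    · exact (((differentiable_const _ |>.mul differentiable_id).add_const _).pow _) _
  · intro z hz
    refine (DifferentiableAt.differentiableWithinAt ?_)
    refine DifferentiableAt.div ?_ ?_ (pow_ne_zero _ (hNne z (ball_subset_closedBall hz)))
    · refine DifferentiableAt.mul (differentiable_pow _ |>.differentiableAt) ?_
      refine DifferentiableAt.fun_finsetProd fun j _ => ?_
      apply DifferentiableAt.sub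
      · exact ((differentiable_id.sub_const _) _).mul
          (((differentiable_const _ |>.mul differentiable_id).add_const _ |>.sub
            ((differentiable_const _).mul (differentiable_id.sub_const _))) _)
      · exact ((differentiable_const _).mul (differentiable_id.sub_const _)) _
    · exact (((differentiable_const _ |>.mul differentiable_id).add_const _).pow _) _
  · intro z hz
    rw [mem_sphere_iff_norm] at hz
    have hz0 : z ≠ 0 := by
      intro h
      rw [h, zero_sub, norm_neg] at hz
      exact absurd hz (ne_of_lt hcr)
    have hzc : z - c ≠ 0 := by
      intro h
      rw [h] at hz
      simp at hz
      subst hz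
      exact lt_irrefl _ hr
    have hconj : conj z ≠ 0 := by simpa using hz0
    have h2 : (z - c) * (conj z - conj c) = ((r : ℝ) : ℂ) ^ 2 := by
      rw [← map_sub, Complex.mul_conj, Complex.normSq_eq_norm_sq, hz]
      push_cast; ring
    have hkey : conj z * (z - c) = N z := by
      simp only [hN]
      linear_combination h2
    have hfac : ∀ j, (z - a j) * (N z - conj (a j) * (z - c)) - ((ρ j : ℝ) : ℂ) ^ 2 * (z - c)
        = ((z - a j) * (conj z - conj (a j)) - ((ρ j : ℝ) : ℂ) ^ 2) * (z - c) := by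
      intro j
      linear_combination (z - a j) * hkey.symm
    show (z ^ (2 * n) *
      ∏ j, ((z - a j) * (N z - conj (a j) * (z - c)) - ((ρ j : ℝ) : ℂ) ^ 2 * (z - c))) /
      (N z) ^ n = Ff n a ρ z
    rw [Finset.prod_congr rfl (fun j _ => hfac j), Finset.prod_mul_distrib,
      Finset.prod_const, Finset.card_univ, Fintype.card_fin]
    rw [← hkey, mul_pow, Ff, Qf]
    generalize (∏ j : Fin n, ((z - a j) * (conj z - conj (a j)) - ((ρ j : ℝ) : ℂ) ^ 2)) = P
    field_simp
    rw [div_pow, mul_div_assoc', eq_div_iff (pow_ne_zero n hconj)]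
    ring

lemma leg3 (n : ℕ) (hn : 1 ≤ n) (a : Fin n → ℂ) (ρ : Fin n → ℝ)
    (c : ℂ) (r : ℝ) (hr : 0 < r) (hcr : ‖c‖ = r) :
    ExtHol (Ff n a ρ) c r := by
  have hc0 : c ≠ 0 := by
    intro h
    rw [h] at hcr
    simp at hcr
    exact hr.ne hcr
  have hcconj : conj c ≠ 0 := by simpa using hc0
  refine ⟨fun z => z ^ n *
      (∏ j, ((z - a j) * (conj c * z - conj (a j) * (z - c)) - ((ρ j : ℝ) : ℂ) ^ 2 * (z - c))) /
      (conj c) ^ n, ?_, ?_, ?_⟩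
  · apply Continuous.continuousOn
    apply Continuous.div_const
    exact (continuous_pow n).mul (continuous_finset_prod _ fun j _ =>
      ((continuous_id.sub continuous_const).mul
        ((continuous_const.mul continuous_id).sub
          (continuous_const.mul (continuous_id.sub continuous_const)))).sub
        (continuous_const.mul (continuous_id.sub continuous_const)))
  · apply Differentiable.differentiableOn
    apply Differentiable.div_const
    exact (differentiable_pow n).mul (Differentiable.fun_finsetProd fun j _ =>
      ((differentiable_id.sub_const _).mul
        ((differentiable_const _ |>.mul differentiable_id).sub
          ((differentiable_const _).mul (differentiable_id.sub_const _)))).sub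
        ((differentiable_const _).mul (differentiable_id.sub_const _)))
  · intro z hz
    rw [mem_sphere_iff_norm] at hz
    by_cases hz0 : z = 0
    · subst hz0
      show (0 : ℂ) ^ n * _ / _ = Ff n a ρ 0
      rw [zero_pow (by omega : n ≠ 0), zero_mul, zero_div, Ff]
      simp [zero_pow (by omega : n ≠ 0)]
    · have hzc : z - c ≠ 0 := by
        intro h
        rw [h] at hz
        simp at hz
        subst hz
        exact lt_irrefl _ hr
      have hconj : conj z ≠ 0 := by simpa using hz0
      have h2 : (z - c) * (conj z - conj c) = ((r : ℝ) : ℂ) ^ 2 := by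
        rw [← map_sub, Complex.mul_conj, Complex.normSq_eq_norm_sq, hz]
        push_cast; ring
      have h3 : c * conj c = ((r : ℝ) : ℂ) ^ 2 := by
        rw [Complex.mul_conj, Complex.normSq_eq_norm_sq, hcr]
        push_cast; ring
      have hkey : conj z * (z - c) = conj c * z := by
        linear_combination h2 - h3
      have hfac : ∀ j, (z - a j) * (conj c * z - conj (a j) * (z - c)) - ((ρ j : ℝ) : ℂ) ^ 2 * (z - c)
          = ((z - a j) * (conj z - conj (a j)) - ((ρ j : ℝ) : ℂ) ^ 2) * (z - c) := by
        intro j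
        linear_combination (z - a j) * hkey.symm
      show (z ^ n *
        ∏ j, ((z - a j) * (conj c * z - conj (a j) * (z - c)) - ((ρ j : ℝ) : ℂ) ^ 2 * (z - c))) /
        (conj c) ^ n = Ff n a ρ z
      rw [Finset.prod_congr rfl (fun j _ => hfac j), Finset.prod_mul_distrib,
        Finset.prod_const, Finset.card_univ, Fintype.card_fin, Ff, Qf]
      have hkeyn : (conj z) ^ n * (z - c) ^ n = (conj c) ^ n * z ^ n := by
        rw [← mul_pow, ← mul_pow, hkey]
      generalize (∏ j : Fin n, ((z - a j) * (conj z - conj (a j)) - ((ρ j : ℝ) : ℂ) ^ 2)) = P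
      field_simp
      rw [div_pow, mul_div_assoc', eq_div_iff (pow_ne_zero n hconj)]
      linear_combination (z ^ n * P) * hkeyn

lemma Qf_zero_ne (n : ℕ) (a : Fin n → ℂ) (ρ : Fin n → ℝ)
    (hρ : ∀ j, 0 < ρ j) (ha : ∀ j, ρ j < ‖a j‖) : Qf n a ρ 0 ≠ 0 := by
  simp only [Qf]
  rw [Finset.prod_ne_zero_iff]
  intro j _
  have h : ((0:ℂ) - a j) * (conj 0 - conj (a j)) - ((ρ j : ℝ) : ℂ) ^ 2
      = (((‖a j‖) ^ 2 - (ρ j) ^ 2 : ℝ) : ℂ) := by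
    rw [map_zero, zero_sub, zero_sub, neg_mul_neg, Complex.mul_conj, Complex.normSq_eq_norm_sq]
    push_cast; ring
  rw [h, Complex.ofReal_ne_zero]
  nlinarith [hρ j, ha j]

lemma leg5 (n : ℕ) (hn : 1 ≤ n) (a : Fin n → ℂ) (ρ : Fin n → ℝ)
    (hρ : ∀ j, 0 < ρ j) (ha : ∀ j, ρ j < ‖a j‖) :
    ∃ z, ¬ DifferentiableAt ℂ (Ff n a ρ) z := by
  by_contra hcon
  push_neg at hcon
  have hd : Differentiable ℂ (Ff n a ρ) := fun z => hcon z
  have hA : AnalyticAt ℂ (Ff n a ρ) 0 := hd.analyticAt 0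
  have hK : Qf n a ρ 0 ≠ 0 := Qf_zero_ne n a ρ hρ ha
  have hpath1 : Tendsto (fun t : ℝ => (t : ℂ)) (𝓝[>] (0:ℝ)) (𝓝 0) := by
    have := Complex.continuous_ofReal.tendsto 0
    simpa using this.mono_left nhdsWithin_le_nhds
  have hQt : Tendsto (fun t : ℝ => Qf n a ρ (t : ℂ)) (𝓝[>] (0:ℝ)) (𝓝 (Qf n a ρ 0)) :=
    ((Qf_cont n a ρ).continuousAt.tendsto).comp hpath1
  have hfreal : ∀ t : ℝ, 0 < t → Ff n a ρ (t : ℂ) = (t : ℂ) ^ n * Qf n a ρ (t : ℂ) := by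
    intro t ht
    have htC : (t : ℂ) ≠ 0 := Complex.ofReal_ne_zero.mpr ht.ne'
    simp only [Ff, Complex.conj_ofReal]
    rw [sq, mul_div_assoc, div_self htC, mul_one]
  -- the rotation ε
  set θ : ℝ := Real.pi / (2 * n) with hθ
  set ε : ℂ := Complex.exp (θ * Complex.I) with hε
  have hεne : ε ≠ 0 := Complex.exp_ne_zero _
  have hεconj : conj ε = Complex.exp (-(↑θ * Complex.I)) := by
    rw [hε, ← Complex.exp_conj]
    congr 1
    simp [Complex.conj_ofReal]
  have hεconj_ne : conj ε ≠ 0 := by rw [hεconj]; exact Complex.exp_ne_zero _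
  have hεunit : ε * conj ε = 1 := by
    rw [hε, hεconj, ← Complex.exp_add]
    simp
  have hε2n : ε ^ (2 * n) = -1 := by
    rw [hε, ← Complex.exp_nat_mul]
    have hnr : (n : ℝ) ≠ 0 := Nat.cast_ne_zero.mpr (by omega)
    have h1 : ((2 * n : ℕ) : ℝ) * θ = Real.pi := by
      rw [hθ]; push_cast; field_simp
    have h2 : ((2 * n : ℕ) : ℂ) * (↑θ * Complex.I) = ↑Real.pi * Complex.I := by
      calc ((2 * n : ℕ) : ℂ) * (↑θ * Complex.I) = ↑(((2 * n : ℕ) : ℝ) * θ) * Complex.I := by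
            push_cast; ring
        _ = ↑Real.pi * Complex.I := by rw [h1]
    rw [h2, Complex.exp_pi_mul_I]
  have hpath2 : Tendsto (fun t : ℝ => ε * (t : ℂ)) (𝓝[>] (0:ℝ)) (𝓝 0) := by
    have hc : Continuous (fun t : ℝ => ε * (t : ℂ)) :=
      continuous_const.mul Complex.continuous_ofReal
    have h := hc.tendsto 0
    simp only [Complex.ofReal_zero, mul_zero] at h
    exact h.mono_left nhdsWithin_le_nhds
  have hfeps : ∀ t : ℝ, 0 < t →
      Ff n a ρ (ε * t) = ε ^ (3 * n) * (t : ℂ) ^ n * Qf n a ρ (ε * t) := by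
    intro t ht
    have htC : (t : ℂ) ≠ 0 := Complex.ofReal_ne_zero.mpr ht.ne'
    have h3 : (ε * (t : ℂ)) ^ 2 / (conj ε * (t : ℂ)) = ε ^ 3 * (t : ℂ) := by
      rw [div_eq_iff (mul_ne_zero hεconj_ne htC)]
      linear_combination (-(ε ^ 2) * (t : ℂ) ^ 2) * hεunit
    simp only [Ff, map_mul, Complex.conj_ofReal]
    rw [h3, mul_pow, ← pow_mul]
  -- order analysis
  by_cases htop : analyticOrderAt (Ff n a ρ) 0 = ⊤
  · obtain ⟨t, ht⟩ := ((hpath1.eventually ((analyticOrderAt_eq_top.mp htop).and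
        ((Qf_cont n a ρ).continuousAt.eventually_ne hK))).and self_mem_nhdsWithin).exists
    have htp : 0 < t := Set.mem_Ioi.mp ht.2
    have htC : (t : ℂ) ≠ 0 := Complex.ofReal_ne_zero.mpr htp.ne'
    have h := hfreal t htp
    rw [ht.1.1] at h
    exact ht.1.2 ((mul_eq_zero.mp h.symm).resolve_left (pow_ne_zero n htC))
  · obtain ⟨m, hm⟩ := ENat.ne_top_iff_exists.mp htop
    obtain ⟨g, hg, hg0, hfg⟩ := (hA.analyticOrderAt_eq_natCast).mp hm.symm
    simp only [sub_zero, smul_eq_mul] at hfg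
    have hgt : Tendsto (fun t : ℝ => g (t : ℂ)) (𝓝[>] (0:ℝ)) (𝓝 (g 0)) :=
      (hg.continuousAt.tendsto).comp hpath1
    have hev1 : ∀ᶠ t : ℝ in 𝓝[>] (0:ℝ),
        (t : ℂ) ^ n * Qf n a ρ (t : ℂ) = (t : ℂ) ^ m * g (t : ℂ) := by
      filter_upwards [hpath1.eventually hfg, self_mem_nhdsWithin] with t h1 h2
      rw [← hfreal t (Set.mem_Ioi.mp h2), h1]
    rcases lt_trichotomy m n with hmn | hmn | hmn
    · -- m < n : g 0 = 0, contradiction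
      have hev2 : (fun t : ℝ => g (t : ℂ)) =ᶠ[𝓝[>] (0:ℝ)]
          fun t : ℝ => (t : ℂ) ^ (n - m) * Qf n a ρ (t : ℂ) := by
        filter_upwards [hev1, self_mem_nhdsWithin] with t h1 h2
        have htC : (t : ℂ) ≠ 0 := Complex.ofReal_ne_zero.mpr (Set.mem_Ioi.mp h2).ne'
        apply mul_left_cancel₀ (pow_ne_zero m htC)
        rw [← h1]
        have hpow : (t : ℂ) ^ m * (t : ℂ) ^ (n - m) = (t : ℂ) ^ n := by
          rw [← pow_add]; congr 1; omega
        linear_combination (Qf n a ρ (t : ℂ)) * hpow.symm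
      have hlim : Tendsto (fun t : ℝ => (t : ℂ) ^ (n - m) * Qf n a ρ (t : ℂ))
          (𝓝[>] (0:ℝ)) (𝓝 0) := by
        have h0 : ((0:ℂ)) ^ (n - m) * Qf n a ρ 0 = 0 := by
          rw [zero_pow (by omega : n - m ≠ 0), zero_mul]
        have := (hpath1.pow (n - m)).mul hQt
        rwa [h0] at this
      exact hg0 (tendsto_nhds_unique (hgt.congr' hev2) hlim)
    · -- m = n : the two directional limits disagree
      rw [hmn] at hev1 hfg
      have hQg : Qf n a ρ 0 = g 0 := by
        have hev2 : (fun t : ℝ => Qf n a ρ (t : ℂ)) =ᶠ[𝓝[>] (0:ℝ)]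
            fun t : ℝ => g (t : ℂ) := by
          filter_upwards [hev1, self_mem_nhdsWithin] with t h1 h2
          exact mul_left_cancel₀
            (pow_ne_zero n (Complex.ofReal_ne_zero.mpr (Set.mem_Ioi.mp h2).ne')) h1
        exact tendsto_nhds_unique (hQt.congr' hev2) hgt
      have hQe : Tendsto (fun t : ℝ => Qf n a ρ (ε * (t : ℂ))) (𝓝[>] (0:ℝ))
          (𝓝 (Qf n a ρ 0)) := ((Qf_cont n a ρ).continuousAt.tendsto).comp hpath2
      have hge : Tendsto (fun t : ℝ => g (ε * (t : ℂ))) (𝓝[>] (0:ℝ)) (𝓝 (g 0)) :=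
        (hg.continuousAt.tendsto).comp hpath2
      have hev3 : (fun t : ℝ => g (ε * (t : ℂ))) =ᶠ[𝓝[>] (0:ℝ)]
          fun t : ℝ => - Qf n a ρ (ε * (t : ℂ)) := by
        filter_upwards [hpath2.eventually hfg, self_mem_nhdsWithin] with t h1 h2
        have htp : 0 < t := Set.mem_Ioi.mp h2
        have htC : (t : ℂ) ≠ 0 := Complex.ofReal_ne_zero.mpr htp.ne'
        have h4 := hfeps t htp
        rw [h1] at h4
        have h5 : ε ^ (3 * n) = - ε ^ n := by
          rw [show 3 * n = n + 2 * n by omega, pow_add, hε2n]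
          ring
        apply mul_left_cancel₀ (pow_ne_zero n (mul_ne_zero hεne htC))
        rw [h4, h5, mul_pow]
        ring
      have hne : g 0 = - Qf n a ρ 0 :=
        tendsto_nhds_unique (hge.congr' hev3) hQe.neg
      have h6 : Qf n a ρ 0 + Qf n a ρ 0 = 0 := by
        linear_combination hQg.trans hne
      exact hK (add_self_eq_zero.mp h6)
    · -- n < m : Qf 0 = 0, contradiction
      have hev2 : (fun t : ℝ => Qf n a ρ (t : ℂ)) =ᶠ[𝓝[>] (0:ℝ)]
          fun t : ℝ => (t : ℂ) ^ (m - n) * g (t : ℂ) := by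
        filter_upwards [hev1, self_mem_nhdsWithin] with t h1 h2
        have htC : (t : ℂ) ≠ 0 := Complex.ofReal_ne_zero.mpr (Set.mem_Ioi.mp h2).ne'
        apply mul_left_cancel₀ (pow_ne_zero n htC)
        rw [h1]
        have hpow : (t : ℂ) ^ n * (t : ℂ) ^ (m - n) = (t : ℂ) ^ m := by
          rw [← pow_add]; congr 1; omega
        linear_combination (-(g (t : ℂ))) * hpow
      have hlim : Tendsto (fun t : ℝ => (t : ℂ) ^ (m - n) * g (t : ℂ))
          (𝓝[>] (0:ℝ)) (𝓝 0) := by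
        have h0 : ((0:ℂ)) ^ (m - n) * g 0 = 0 := by
          rw [zero_pow (by omega : m - n ≠ 0), zero_mul]
        have := (hpath1.pow (m - n)).mul hgt
        rwa [h0] at this
      exact hK (tendsto_nhds_unique (hQt.congr' hev2) hlim)


theorem stmt14 (n : ℕ) (hn : 1 ≤ n) (a : Fin n → ℂ) (ρ : Fin n → ℝ)
    (hρ : ∀ j, 0 < ρ j) (ha : ∀ j, ρ j < ‖a j‖) :
    let f : ℂ → ℂ := fun z => if z = 0 then 0 else
      (z ^ 2 / conj z) ^ n *
        ∏ j, ((z - a j) * (conj z - conj (a j)) - ((ρ j : ℝ) : ℂ) ^ 2)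
    Continuous f ∧
    (∀ (c : ℂ) (r : ℝ), 0 < r → ‖c‖ < r → ExtHol f c r) ∧
    (∀ (c : ℂ) (r : ℝ), 0 < r → ‖c‖ = r → ExtHol f c r) ∧
    (∀ j, ExtHol f (a j) (ρ j)) ∧
    (∃ z, ¬ DifferentiableAt ℂ f z) := by
  intro f
  have hf : f = Ff n a ρ := Ff_eq n hn a ρ
  rw [hf]
  exact ⟨Ff_cont n a ρ, fun c r hr hcr => leg2 n a ρ c r hr hcr,
    fun c r hr hcr => leg3 n hn a ρ c r hr hcr, fun j => leg4 n a ρ hρ ha j,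
    leg5 n hn a ρ hρ ha⟩
end

section
/- Let g : ℂ → ℂ be a function from the disc algebra (continuous on the closed unit disc {ζ : |ζ| ≤ 1} and holomorphic on the open unit disc {ζ : |ζ| < 1}). Define f : ℂ \ {0} → ℂ by f(z) = g(z/conj(z)). Then f is continuous on ℂ \ {0} and f extends holomorphically from every circle bΔ(a,ρ) with |a| < ρ (every circle surrounding the origin). -/
open Complex Metric ComplexConjugate

theorem stmt15 (g : ℂ → ℂ) (hgc : ContinuousOn g (closedBall 0 1))
    (hgd : DifferentiableOn ℂ g (ball 0 1)) :
    ContinuousOn (fun z : ℂ => g (z / conj z)) {(0 : ℂ)}ᶜ ∧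
    ∀ (a : ℂ) (ρ : ℝ), 0 < ρ → ‖a‖ < ρ →
      ExtHol (fun z : ℂ => g (z / conj z)) a ρ := by
  constructor
  · apply hgc.comp
    · exact ContinuousOn.div continuousOn_id
        (Complex.continuous_conj.continuousOn)
        (fun z hz => by
          simp only [Set.mem_compl_iff, Set.mem_singleton_iff] at hz
          simpa using hz)
    · intro z hz
      simp only [Set.mem_compl_iff, Set.mem_singleton_iff] at hz
      have h1 : ‖z / conj z‖ = 1 := by
        rw [norm_div, Complex.norm_conj, div_self]
        simpa using hz
      rw [mem_closedBall, dist_zero_right, h1]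
  · intro a ρ hρ ha
    set den : ℂ → ℂ := fun z => conj a * (z - a) + (ρ : ℂ) ^ 2 with hden_def
    set num : ℂ → ℂ := fun z => z * (z - a) with hnum_def
    -- identity on normSq
    have hid : ∀ z : ℂ, Complex.normSq (den z) - Complex.normSq (num z) =
        (ρ ^ 2 - Complex.normSq (z - a)) *
          (ρ ^ 2 + Complex.normSq (z - a) + 2 * ((conj a * (z - a)).re)) := by
      intro z
      simp only [hden_def, hnum_def, Complex.normSq_apply, Complex.add_re, Complex.add_im,
        Complex.mul_re, Complex.mul_im, Complex.sub_re, Complex.sub_im,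
        Complex.conj_re, Complex.conj_im, ← Complex.ofReal_pow,
        Complex.ofReal_re, Complex.ofReal_im]
      ring
    have hre : ∀ z : ℂ, |(conj a * (z - a)).re| ≤ ‖a‖ * ‖z - a‖ := by
      intro z
      calc |(conj a * (z - a)).re| ≤ ‖conj a * (z - a)‖ := Complex.abs_re_le_norm _
        _ = ‖a‖ * ‖z - a‖ := by rw [norm_mul, Complex.norm_conj]
    have hfac : ∀ z : ℂ, ‖z - a‖ ≤ ρ →
        0 < ρ ^ 2 + Complex.normSq (z - a) + 2 * ((conj a * (z - a)).re) := by
      intro z hz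
      have h1 := hre z
      have h2 : Complex.normSq (z - a) = (‖z - a‖) ^ 2 := (Complex.sq_norm _).symm
      have h3 : (0:ℝ) ≤ ‖z - a‖ := norm_nonneg _
      have h4 : (0:ℝ) ≤ ‖a‖ := norm_nonneg _
      rw [h2]
      obtain ⟨h1a, h1b⟩ := abs_le.mp h1
      nlinarith [sq_nonneg (‖a‖ - ‖z - a‖)]
    -- denominator nonzero on the closed ball
    have hden : ∀ z ∈ closedBall a ρ, den z ≠ 0 := by
      intro z hz h0
      have hzd : ‖z - a‖ ≤ ρ := by
        simpa [mem_closedBall, Complex.dist_eq] using hz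
      have h1 : conj a * (z - a) = -((ρ : ℂ) ^ 2) := by
        have := h0
        simp only [hden_def] at this
        linear_combination this
      have h2 := congrArg (‖·‖) h1
      rw [norm_mul, Complex.norm_conj, norm_neg] at h2
      have h3 : ‖(ρ : ℂ) ^ 2‖ = ρ ^ 2 := by
        rw [norm_pow, Complex.norm_of_nonneg hρ.le]
      rw [h3] at h2
      nlinarith [norm_nonneg a, norm_nonneg (z - a)]
    have habs_le : ∀ z ∈ closedBall a ρ,
        ‖num z‖ ≤ ‖den z‖ := by
      intro z hz
      have hzd : ‖z - a‖ ≤ ρ := by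
        simpa [mem_closedBall, Complex.dist_eq] using hz
      have h1 := hid z
      have h3 := hfac z hzd
      have h5 : ρ ^ 2 - Complex.normSq (z - a) ≥ 0 := by
        rw [(Complex.sq_norm (z-a)).symm]; nlinarith [norm_nonneg (z - a)]
      have h6 : Complex.normSq (num z) ≤ Complex.normSq (den z) := by nlinarith
      have := Real.sqrt_le_sqrt h6
      simpa [Complex.norm_def] using this
    have habs_lt : ∀ z ∈ ball a ρ,
        ‖num z‖ < ‖den z‖ := by
      intro z hz
      have hzd : ‖z - a‖ < ρ := by
        simpa [mem_ball, Complex.dist_eq] using hz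
      have h1 := hid z
      have h3 := hfac z hzd.le
      have h5 : ρ ^ 2 - Complex.normSq (z - a) > 0 := by
        rw [(Complex.sq_norm (z-a)).symm]; nlinarith [norm_nonneg (z - a)]
      have h6 : Complex.normSq (num z) < Complex.normSq (den z) := by nlinarith
      have := Real.sqrt_lt_sqrt (Complex.normSq_nonneg _) h6
      simpa [Complex.norm_def] using this
    refine ⟨fun z => g (num z / den z), ?_, ?_, ?_⟩
    · -- continuity of the extension
      apply hgc.comp
      · exact ContinuousOn.div
          ((continuousOn_id.mul (continuousOn_id.sub continuousOn_const)))
          ((continuousOn_const.mul (continuousOn_id.sub continuousOn_const)).add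
            continuousOn_const) hden
      · intro z hz
        have h1 := habs_le z hz
        have h2 : ‖den z‖ > 0 := by
          simpa [norm_pos_iff] using hden z hz
        have : ‖num z / den z‖ ≤ 1 := by
          rw [norm_div]; exact div_le_one_of_le₀ h1 h2.le
        simpa [mem_closedBall, Complex.dist_eq] using this
    · -- differentiability of the extension
      apply hgd.comp
      · apply DifferentiableOn.div
        · exact (differentiable_id.mul (differentiable_id.sub (differentiable_const _))).differentiableOn
        · exact ((differentiable_const _ |>.mul (differentiable_id.sub (differentiable_const _))).add
            (differentiable_const _)).differentiableOn
        · exact fun z hz => hden z (ball_subset_closedBall hz)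
      · intro z hz
        have h1 := habs_lt z hz
        have h2 : ‖den z‖ > 0 := by
          simpa [norm_pos_iff] using hden z (ball_subset_closedBall hz)
        have : ‖num z / den z‖ < 1 := by
          rw [norm_div]; exact (div_lt_one h2).mpr h1
        simpa [mem_ball, Complex.dist_eq] using this
    · -- agreement on the sphere
      intro z hz
      have hzs : ‖z - a‖ = ρ := by
        simpa [mem_sphere, Complex.dist_eq] using hz
      have hw : z - a ≠ 0 := by
        intro h; rw [h] at hzs; simp at hzs; linarith
      have hz0 : z ≠ 0 := by
        intro h; rw [h] at hzs
        simp only [zero_sub, norm_neg] at hzs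
        exact absurd hzs (ne_of_lt ha)
      have hcz : conj z ≠ 0 := by simpa using hz0
      have hkey : den z = conj z * (z - a) := by
        have hm : conj (z - a) * (z - a) = ((ρ : ℂ)) ^ 2 := by
          have : conj (z - a) * (z - a) = (Complex.normSq (z - a) : ℂ) := by
            rw [mul_comm, Complex.mul_conj]
          rw [this]
          have : Complex.normSq (z - a) = ρ ^ 2 := by
            rw [← Complex.sq_norm, hzs]
          rw [this]; push_cast; ring
        calc den z = conj a * (z - a) + conj (z - a) * (z - a) := by rw [hm]
          _ = conj z * (z - a) := by rw [← add_mul, map_sub]; ring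
      show g (num z / den z) = g (z / conj z)
      congr 1
      rw [hkey, hnum_def]
      exact mul_div_mul_right z ((starRingEnd ℂ) z) hw
end

section
/- Let f : ℂ \ {0} → ℂ be continuous and constant on each line through the origin, i.e. f(tz) = f(z) for all z ≠ 0 and all real t ≠ 0. Then the following are equivalent: (i) there exist a ∈ ℂ and ρ > 0 with |a| < ρ such that f extends holomorphically from bΔ(a,ρ); (ii) f extends holomorphically from every circle bΔ(a,ρ) with |a| < ρ; (iii) there exists a function g from the disc algebra such that f(z) = g(z/conj(z)) for all z ≠ 0. -/
open Complex Metric ComplexConjugate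

noncomputable def Dd (a : ℂ) (ρ : ℝ) (z : ℂ) : ℂ :=
  conj a * z + ((ρ^2 - Complex.normSq a : ℝ) : ℂ)

lemma keyid (a z : ℂ) (ρ : ℝ) :
    Complex.normSq (z * (z - a)) - Complex.normSq (Dd a ρ z)
      = (Complex.normSq z + ρ^2 - Complex.normSq a) * (Complex.normSq (z - a) - ρ^2) := by
  simp only [Dd, Complex.normSq_apply, Complex.mul_re, Complex.mul_im, Complex.sub_re,
    Complex.sub_im, Complex.add_re, Complex.add_im, Complex.conj_re, Complex.conj_im,
    Complex.ofReal_re, Complex.ofReal_im]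
  ring

lemma sphere_normSq (a z : ℂ) (ρ : ℝ) (hz : z ∈ sphere a ρ) : Complex.normSq (z - a) = ρ^2 := by
  rw [mem_sphere_iff_norm] at hz
  rw [Complex.normSq_eq_norm_sq, hz]

lemma sphereD (a z : ℂ) (ρ : ℝ) (hz : z ∈ sphere a ρ) :
    conj z * (z - a) = Dd a ρ z := by
  have h : (z - a) * (conj z - conj a) = ((ρ^2 : ℝ) : ℂ) := by
    rw [← map_sub, Complex.mul_conj, sphere_normSq a z ρ hz]
  have hna : ((Complex.normSq a : ℝ) : ℂ) = a * conj a := (Complex.mul_conj a).symm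
  rw [Dd]
  push_cast [Complex.ofReal_sub] at *
  linear_combination h + hna

variable {a : ℂ} {ρ : ℝ}

lemma pos_fac (ha : ‖a‖ < ρ) (z : ℂ) :
    0 < Complex.normSq z + ρ^2 - Complex.normSq a := by
  have h1 : Complex.normSq a < ρ^2 := by
    rw [← Complex.sq_norm]
    nlinarith [norm_nonneg a]
  nlinarith [Complex.normSq_nonneg z]

lemma Dd_ne (ha : ‖a‖ < ρ) {z : ℂ} (hz : z ∈ closedBall a ρ) : Dd a ρ z ≠ 0 := by
  intro h0
  have hk := keyid a z ρ
  rw [h0] at hk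
  simp only [map_zero] at hk
  have hzb : Complex.normSq (z - a) - ρ^2 ≤ 0 := by
    have := mem_closedBall_iff_norm.mp hz
    have h2 : Complex.normSq (z - a) ≤ ρ^2 := by
      rw [Complex.normSq_eq_norm_sq]
      nlinarith [norm_nonneg (z - a)]
    linarith
  have hpos := pos_fac ha z
  have hN : Complex.normSq (z * (z - a)) = 0 := by
    nlinarith [Complex.normSq_nonneg (z * (z - a)), mul_nonpos_of_nonneg_of_nonpos hpos.le hzb]
  have : z * (z - a) = 0 := Complex.normSq_eq_zero.mp hN
  have hρ : 0 < ρ := lt_of_le_of_lt (norm_nonneg a) ha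
  rcases mul_eq_zero.mp this with h | h
  · subst h
    simp only [Dd, mul_zero, zero_add] at h0
    have : (ρ^2 - Complex.normSq a : ℝ) = 0 := by exact_mod_cast h0
    have h1 : Complex.normSq a < ρ^2 := by rw [← Complex.sq_norm]; nlinarith [norm_nonneg a]
    linarith
  · have hza : z = a := sub_eq_zero.mp h
    subst hza
    rw [Dd] at h0
    have hcc : conj z * z = ((Complex.normSq z : ℝ) : ℂ) := by rw [mul_comm, Complex.mul_conj]
    rw [hcc] at h0
    have : (Complex.normSq z + (ρ^2 - Complex.normSq z) : ℝ) = 0 := by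
      exact_mod_cast h0
    nlinarith

example : True := trivial

lemma abs_le_of_normSq_le {x y : ℂ} (h : Complex.normSq x ≤ Complex.normSq y) :
    ‖x‖ ≤ ‖y‖ := by
  nlinarith [Complex.sq_norm x, Complex.sq_norm y, norm_nonneg x, norm_nonneg y]

lemma abs_lt_of_normSq_lt {x y : ℂ} (h : Complex.normSq x < Complex.normSq y) :
    ‖x‖ < ‖y‖ := by
  nlinarith [Complex.sq_norm x, Complex.sq_norm y, norm_nonneg x, norm_nonneg y]

/-- any root of `z(z-a) = w · D(z)` with `|w| ≤ 1` lies in the closed ball -/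
lemma root_mem_closedBall (ha : ‖a‖ < ρ) {w z : ℂ} (hw : ‖w‖ ≤ 1)
    (hz : z * (z - a) = w * Dd a ρ z) : z ∈ closedBall a ρ := by
  have hk := keyid a z ρ
  have h1 : Complex.normSq (z * (z - a)) = Complex.normSq w * Complex.normSq (Dd a ρ z) := by
    rw [hz, map_mul]
  have hw2 : Complex.normSq w ≤ 1 := by
    rw [← Complex.sq_norm]; nlinarith [norm_nonneg w]
  have hD := Complex.normSq_nonneg (Dd a ρ z)
  have hpos := pos_fac ha z
  have h2 : Complex.normSq (z - a) ≤ ρ^2 := by nlinarith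
  rw [mem_closedBall_iff_norm]
  have hρ : 0 < ρ := lt_of_le_of_lt (norm_nonneg a) ha
  rw [Complex.normSq_eq_norm_sq] at h2
  nlinarith [norm_nonneg (z - a)]

lemma root_mem_ball (ha : ‖a‖ < ρ) {w z : ℂ} (hw : ‖w‖ < 1)
    (hz : z * (z - a) = w * Dd a ρ z) : z ∈ ball a ρ := by
  have hρ : 0 < ρ := lt_of_le_of_lt (norm_nonneg a) ha
  by_cases hD0 : Dd a ρ z = 0
  · rw [hD0, mul_zero] at hz
    rcases mul_eq_zero.mp hz with h | h
    · subst h; simpa [mem_ball_iff_norm] using ha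
    · rw [sub_eq_zero] at h; subst h; simp [mem_ball_iff_norm, hρ]
  · have hk := keyid a z ρ
    have h1 : Complex.normSq (z * (z - a)) = Complex.normSq w * Complex.normSq (Dd a ρ z) := by
      rw [hz, map_mul]
    have hw2 : Complex.normSq w < 1 := by
      rw [← Complex.sq_norm]; nlinarith [norm_nonneg w]
    have hD : 0 < Complex.normSq (Dd a ρ z) := by
      rcases (Complex.normSq_nonneg (Dd a ρ z)).lt_or_eq with h | h
      · exact h
      · exact absurd (Complex.normSq_eq_zero.mp h.symm) hD0
    have hpos := pos_fac ha z
    have h2 : Complex.normSq (z - a) < ρ^2 := by nlinarith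
    rw [mem_ball_iff_norm]
    rw [Complex.normSq_eq_norm_sq] at h2
    nlinarith [norm_nonneg (z - a)]

lemma root_mem_sphere (ha : ‖a‖ < ρ) {w z : ℂ} (hw : ‖w‖ = 1)
    (hz : z * (z - a) = w * Dd a ρ z) : z ∈ sphere a ρ := by
  have hk := keyid a z ρ
  have h1 : Complex.normSq (z * (z - a)) = Complex.normSq w * Complex.normSq (Dd a ρ z) := by
    rw [hz, map_mul]
  have hw2 : Complex.normSq w = 1 := by rw [← Complex.sq_norm, hw]; norm_num
  have hpos := pos_fac ha z
  have h2 : Complex.normSq (z - a) = ρ^2 := by nlinarith [Complex.normSq_nonneg (Dd a ρ z)]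
  rw [mem_sphere_iff_norm]
  have hρ : 0 < ρ := lt_of_le_of_lt (norm_nonneg a) ha
  rw [Complex.normSq_eq_norm_sq] at h2
  nlinarith [norm_nonneg (z - a)]

/-- the point `a` is not on the sphere -/
lemma a_not_mem_sphere (ha : ‖a‖ < ρ) : a ∉ sphere a ρ := by
  simp only [mem_sphere_iff_norm, sub_self, norm_zero]
  intro h
  have := norm_nonneg a
  linarith

lemma zero_not_mem_sphere (ha : ‖a‖ < ρ) : (0:ℂ) ∉ sphere a ρ := by
  simp only [mem_sphere_iff_norm, zero_sub, norm_neg]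
  intro h
  linarith

/-- on the sphere, a root of the quadratic satisfies `z = w · conj z` -/
lemma root_rel (ha : ‖a‖ < ρ) {w z : ℂ} (hzs : z ∈ sphere a ρ)
    (hz : z * (z - a) = w * Dd a ρ z) : z = w * conj z := by
  rw [← sphereD a z ρ hzs] at hz
  have hza : z - a ≠ 0 := by
    rw [sub_ne_zero]
    intro h; rw [h] at hzs; exact a_not_mem_sphere ha hzs
  have : z * (z - a) = (w * conj z) * (z - a) := by rw [hz]; ring
  exact mul_right_cancel₀ hza this

lemma Dd_cont (a : ℂ) (ρ : ℝ) : Continuous (Dd a ρ) := by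
  unfold Dd; fun_prop

lemma Dd_diff (a : ℂ) (ρ : ℝ) : Differentiable ℂ (Dd a ρ) := by
  unfold Dd; fun_prop

/-- L1: from disc algebra representation to extension from every circle -/
lemma L1 {f g : ℂ → ℂ} (hgc : ContinuousOn g (closedBall 0 1))
    (hgd : DifferentiableOn ℂ g (ball 0 1))
    (hfg : ∀ z : ℂ, z ≠ 0 → f z = g (z / conj z))
    (a : ℂ) (ρ : ℝ) (hρ : 0 < ρ) (ha : ‖a‖ < ρ) : ExtHol f a ρ := by
  set φ : ℂ → ℂ := fun z => z * (z - a) / Dd a ρ z with hφ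
  have hφc : ContinuousOn φ (closedBall a ρ) := by
    apply ContinuousOn.div
    · fun_prop
    · exact (Dd_cont a ρ).continuousOn
    · exact fun z hz => Dd_ne ha hz
  have hφd : DifferentiableOn ℂ φ (ball a ρ) := by
    apply DifferentiableOn.div
    · fun_prop
    · exact (Dd_diff a ρ).differentiableOn
    · exact fun z hz => Dd_ne ha (ball_subset_closedBall hz)
  have hmaps : ∀ z ∈ closedBall a ρ, φ z ∈ closedBall (0:ℂ) 1 := by
    intro z hz
    have hD := Dd_ne ha hz
    have hk := keyid a z ρ
    have h2 : Complex.normSq (z - a) ≤ ρ^2 := by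
      have := mem_closedBall_iff_norm.mp hz
      rw [Complex.normSq_eq_norm_sq]
      nlinarith [norm_nonneg (z - a)]
    have hpos := pos_fac ha z
    have hle : Complex.normSq (z * (z - a)) ≤ Complex.normSq (Dd a ρ z) := by nlinarith
    simp only [mem_closedBall_iff_norm, sub_zero, hφ, norm_div]
    rw [div_le_one (norm_pos_iff.mpr hD)]
    exact abs_le_of_normSq_le hle
  have hmapso : ∀ z ∈ ball a ρ, φ z ∈ ball (0:ℂ) 1 := by
    intro z hz
    have hD := Dd_ne ha (ball_subset_closedBall hz)
    have hk := keyid a z ρ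
    have h2 : Complex.normSq (z - a) < ρ^2 := by
      have := mem_ball_iff_norm.mp hz
      rw [Complex.normSq_eq_norm_sq]
      nlinarith [norm_nonneg (z - a)]
    have hpos := pos_fac ha z
    have hlt : Complex.normSq (z * (z - a)) < Complex.normSq (Dd a ρ z) := by nlinarith
    simp only [mem_ball_iff_norm, sub_zero, hφ, norm_div]
    rw [div_lt_one (norm_pos_iff.mpr hD)]
    exact abs_lt_of_normSq_lt hlt
  refine ⟨g ∘ φ, hgc.comp hφc hmaps, hgd.comp hφd hmapso, ?_⟩
  intro z hz
  have hz0 : z ≠ 0 := fun h => zero_not_mem_sphere ha (h ▸ hz)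
  have hza : z - a ≠ 0 := by
    rw [sub_ne_zero]; intro h; rw [h] at hz; exact a_not_mem_sphere ha hz
  have hcz : conj z ≠ 0 := by simpa using hz0
  have : φ z = z / conj z := by
    rw [hφ]
    simp only
    rw [← sphereD a z ρ hz]
    field_simp
  rw [Function.comp_apply, this, hfg z hz0]

noncomputable def sS (a : ℂ) (w : ℂ) : ℂ := a + conj a * w
noncomputable def dd (a : ℂ) (ρ : ℝ) (w : ℂ) : ℂ :=
  sS a w ^ 2 + 4 * w * ((ρ^2 - Complex.normSq a : ℝ) : ℂ)
noncomputable def ee (a : ℂ) (ρ : ℝ) (w : ℂ) : ℂ :=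
  if dd a ρ w = 0 then 0 else Complex.exp (Complex.log (dd a ρ w) / 2)
noncomputable def zz1 (a : ℂ) (ρ : ℝ) (w : ℂ) : ℂ := (sS a w + ee a ρ w) / 2
noncomputable def zz2 (a : ℂ) (ρ : ℝ) (w : ℂ) : ℂ := (sS a w - ee a ρ w) / 2

lemma sq_eq_dd {x : ℂ} (a : ℂ) (ρ : ℝ) (w : ℂ) (hx : x^2 = dd a ρ w) :
    x = ee a ρ w ∨ x = -(ee a ρ w) := by
  have he : (ee a ρ w)^2 = dd a ρ w := by
    rw [ee]
    split_ifs with h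
    · simpa using h.symm
    · rw [sq, ← Complex.exp_add]
      have : Complex.log (dd a ρ w) / 2 + Complex.log (dd a ρ w) / 2
          = Complex.log (dd a ρ w) := by ring
      rw [this, Complex.exp_log h]
  have : (x - ee a ρ w) * (x + ee a ρ w) = 0 := by
    have := hx.trans he.symm
    linear_combination this
  rcases mul_eq_zero.mp this with h | h
  · left; linear_combination h
  · right; linear_combination h

lemma ee_sq (a : ℂ) (ρ : ℝ) (w : ℂ) : (ee a ρ w)^2 = dd a ρ w := by
  rw [ee]
  split_ifs with h
  · simpa using h.symm
  · rw [sq, ← Complex.exp_add]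
    have : Complex.log (dd a ρ w) / 2 + Complex.log (dd a ρ w) / 2
        = Complex.log (dd a ρ w) := by ring
    rw [this, Complex.exp_log h]

/-- the quadratic factorization -/
lemma quad_fac (a : ℂ) (ρ : ℝ) (w z : ℂ) :
    (z - zz1 a ρ w) * (z - zz2 a ρ w) = z * (z - a) - w * Dd a ρ z := by
  have he := ee_sq a ρ w
  simp only [zz1, zz2, sS, dd, Dd] at *
  push_cast at *
  linear_combination (-(1:ℂ)/4) * he

lemma zz1_root (a : ℂ) (ρ : ℝ) (w : ℂ) :
    zz1 a ρ w * (zz1 a ρ w - a) = w * Dd a ρ (zz1 a ρ w) := by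
  have := quad_fac a ρ w (zz1 a ρ w)
  simp only [sub_self, zero_mul] at this
  linear_combination -this

lemma zz2_root (a : ℂ) (ρ : ℝ) (w : ℂ) :
    zz2 a ρ w * (zz2 a ρ w - a) = w * Dd a ρ (zz2 a ρ w) := by
  have := quad_fac a ρ w (zz2 a ρ w)
  simp only [sub_self, mul_zero] at this
  linear_combination -this

lemma zz_sum (a : ℂ) (ρ : ℝ) (w : ℂ) : zz1 a ρ w + zz2 a ρ w = sS a w := by
  simp only [zz1, zz2]; ring

lemma zz1_mem_cb (ha : ‖a‖ < ρ) {w : ℂ} (hw : ‖w‖ ≤ 1) :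
    zz1 a ρ w ∈ closedBall a ρ := root_mem_closedBall ha hw (zz1_root a ρ w)
lemma zz2_mem_cb (ha : ‖a‖ < ρ) {w : ℂ} (hw : ‖w‖ ≤ 1) :
    zz2 a ρ w ∈ closedBall a ρ := root_mem_closedBall ha hw (zz2_root a ρ w)
lemma zz1_mem_sphere (ha : ‖a‖ < ρ) {w : ℂ} (hw : ‖w‖ = 1) :
    zz1 a ρ w ∈ sphere a ρ := root_mem_sphere ha hw (zz1_root a ρ w)
lemma zz2_mem_sphere (ha : ‖a‖ < ρ) {w : ℂ} (hw : ‖w‖ = 1) :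
    zz2 a ρ w ∈ sphere a ρ := root_mem_sphere ha hw (zz2_root a ρ w)

/-- if `z' = w * conj z'` and `z = w * conj z` with `z, z' ≠ 0`, then `f z' = f z`. -/
lemma same_line {f : ℂ → ℂ}
    (hline : ∀ z : ℂ, z ≠ 0 → ∀ t : ℝ, t ≠ 0 → f ((t : ℂ) * z) = f z)
    {w z z' : ℂ} (hw : w ≠ 0) (hz : z ≠ 0) (hz' : z' ≠ 0)
    (h1 : z = w * conj z) (h2 : z' = w * conj z') : f z' = f z := by
  set u : ℂ := z' / z with hu
  have hcz : conj z ≠ 0 := by simpa using hz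
  have hcz' : conj z' ≠ 0 := by simpa using hz'
  have hcw : conj w ≠ 0 := by simpa using hw
  have hcu : conj u = u := by
    have h1c : conj z = conj w * z := by
      conv_lhs => rw [h1]
      simp [map_mul, mul_comm]
    have h2c : conj z' = conj w * z' := by
      conv_lhs => rw [h2]
      simp [map_mul, mul_comm]
    rw [hu, map_div₀, h1c, h2c, mul_div_mul_left _ _ hcw]
  have hureal : (u.re : ℂ) = u := Complex.conj_eq_iff_re.mp hcu
  have hu0 : u ≠ 0 := div_ne_zero hz' hz
  have ht : u.re ≠ 0 := by
    intro h
    rw [h] at hureal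
    exact hu0 (by simpa using hureal.symm)
  have := hline z hz u.re ht
  rw [hureal, hu, div_mul_cancel₀ _ hz] at this
  exact this

lemma boundary_val {f : ℂ → ℂ}
    (hline : ∀ z : ℂ, z ≠ 0 → ∀ t : ℝ, t ≠ 0 → f ((t : ℂ) * z) = f z)
    (ha : ‖a‖ < ρ)
    {G : ℂ → ℂ} (hGb : ∀ z ∈ sphere a ρ, G z = f z)
    {z : ℂ} (hz : z ≠ 0) :
    (G (zz1 a ρ (z / conj z)) + G (zz2 a ρ (z / conj z))) / 2 = f z := by
  set w : ℂ := z / conj z with hwdef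
  have hcz : conj z ≠ 0 := by simpa using hz
  have hw1 : ‖w‖ = 1 := by
    rw [hwdef, norm_div, Complex.norm_conj, div_self (by simpa using hz)]
  have hw0 : w ≠ 0 := by
    intro h; rw [h] at hw1; simp at hw1
  have hzrel : z = w * conj z := by rw [hwdef]; field_simp
  have h1s := zz1_mem_sphere ha hw1
  have h2s := zz2_mem_sphere ha hw1
  have h1rel := root_rel ha h1s (zz1_root a ρ w)
  have h2rel := root_rel ha h2s (zz2_root a ρ w)
  have h10 : zz1 a ρ w ≠ 0 := fun h => zero_not_mem_sphere ha (h ▸ h1s)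
  have h20 : zz2 a ρ w ≠ 0 := fun h => zero_not_mem_sphere ha (h ▸ h2s)
  rw [hGb _ h1s, hGb _ h2s, same_line hline hw0 hz h10 hzrel h1rel,
    same_line hline hw0 hz h20 hzrel h2rel]
  ring

lemma abs_zz_le (ha : ‖a‖ < ρ) {z : ℂ} (hz : z ∈ closedBall a ρ) :
    ‖z‖ ≤ 2 * ρ := by
  have h1 : ‖z - a‖ ≤ ρ := by
    rw [← Complex.dist_eq]; exact mem_closedBall.mp hz
  calc ‖z‖ = ‖z - a + a‖ := by ring_nf
    _ ≤ ‖z - a‖ + ‖a‖ := norm_add_le _ _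
    _ ≤ 2 * ρ := by linarith

lemma Dd_bound (ha : ‖a‖ < ρ) {z : ℂ} (hz : z ∈ closedBall a ρ) :
    ‖Dd a ρ z‖ ≤ 3 * ρ^2 := by
  have hρ : 0 < ρ := lt_of_le_of_lt (norm_nonneg a) ha
  have hzb := abs_zz_le ha hz
  have h1 : Complex.normSq a < ρ^2 := by
    rw [← Complex.sq_norm]; nlinarith [norm_nonneg a]
  have h2 : 0 ≤ Complex.normSq a := Complex.normSq_nonneg a
  calc ‖Dd a ρ z‖
      ≤ ‖conj a * z‖ + ‖((ρ^2 - Complex.normSq a : ℝ) : ℂ)‖ :=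
        norm_add_le _ _
    _ = ‖a‖ * ‖z‖ + |ρ^2 - Complex.normSq a| := by
        rw [norm_mul, Complex.norm_conj, Complex.norm_real, Real.norm_eq_abs]
    _ ≤ ρ * (2*ρ) + ρ^2 := by
        have : |ρ^2 - Complex.normSq a| ≤ ρ^2 := by rw [abs_le]; constructor <;> nlinarith
        have := norm_nonneg z
        nlinarith [norm_nonneg a]
    _ = 3 * ρ^2 := by ring

lemma g_cont (ha : ‖a‖ < ρ) {G : ℂ → ℂ} (hGc : ContinuousOn G (closedBall a ρ)) :
    ContinuousOn (fun w => (G (zz1 a ρ w) + G (zz2 a ρ w)) / 2) (closedBall (0:ℂ) 1) := by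
  have hρ : 0 < ρ := lt_of_le_of_lt (norm_nonneg a) ha
  have hUC0 := Metric.uniformContinuousOn_iff.mp
    ((isCompact_closedBall a ρ).uniformContinuousOn_of_continuous hGc)
  rw [Metric.continuousOn_iff]
  intro w0 hw0 ε hε
  obtain ⟨δ1, hδ1, hUC⟩ := hUC0 ε hε
  refine ⟨min ((δ1/2)^2/(3*ρ^2+1)) (δ1/(2*(ρ+1))), by positivity, ?_⟩
  intro w hw hdist
  have hw1 : ‖w‖ ≤ 1 := by
    have := mem_closedBall.mp hw; rwa [Complex.dist_eq, sub_zero] at this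
  have hw01 : ‖w0‖ ≤ 1 := by
    have := mem_closedBall.mp hw0; rwa [Complex.dist_eq, sub_zero] at this
  have hz1 := zz1_mem_cb ha hw1
  have hz2 := zz2_mem_cb ha hw1
  have hy1 := zz1_mem_cb ha hw01
  have hy2 := zz2_mem_cb ha hw01
  set z1 := zz1 a ρ w with hz1d
  set z2 := zz2 a ρ w with hz2d
  set y1 := zz1 a ρ w0 with hy1d
  set y2 := zz2 a ρ w0 with hy2d
  have hδa : dist w w0 < (δ1/2)^2/(3*ρ^2+1) := lt_of_lt_of_le hdist (min_le_left _ _)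
  have hδb : dist w w0 < δ1/(2*(ρ+1)) := lt_of_lt_of_le hdist (min_le_right _ _)
  -- key product identity
  have hprod : (z1 - y1) * (z1 - y2) = (w - w0) * Dd a ρ z1 := by
    have h1 := quad_fac a ρ w0 z1
    have h2 := zz1_root a ρ w
    linear_combination h1 + h2
  have habs : ‖z1 - y1‖ * ‖z1 - y2‖ < (δ1/2)^2 := by
    have : ‖(z1 - y1) * (z1 - y2)‖ = ‖w - w0‖ * ‖Dd a ρ z1‖ := by
      rw [hprod, norm_mul]
    rw [← norm_mul, this]
    have hD := Dd_bound ha hz1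
    have h3 : ‖w - w0‖ = dist w w0 := (Complex.dist_eq w w0).symm
    have h4 : 0 ≤ dist w w0 := dist_nonneg
    have h5 : 0 ≤ ‖Dd a ρ z1‖ := norm_nonneg _
    rw [h3]
    have h6 : dist w w0 * (3*ρ^2+1) < (δ1/2)^2 := (lt_div_iff₀ (by positivity)).mp hδa
    calc dist w w0 * ‖Dd a ρ z1‖
        ≤ dist w w0 * (3*ρ^2+1) := by
          apply mul_le_mul_of_nonneg_left (by linarith) h4
      _ < (δ1/2)^2 := h6
  -- sum difference bound
  have hsum : ‖sS a w - sS a w0‖ < δ1/2 := by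
    have : sS a w - sS a w0 = conj a * (w - w0) := by simp only [sS]; ring
    rw [this, norm_mul, Complex.norm_conj, ← Complex.dist_eq]
    have h7 : 0 ≤ ‖a‖ := norm_nonneg a
    have h4 : 0 ≤ dist w w0 := dist_nonneg
    have h6 : dist w w0 * (2*(ρ+1)) < δ1 := (lt_div_iff₀ (by positivity)).mp hδb
    nlinarith [mul_le_mul_of_nonneg_right (le_of_lt ha) h4]
  have hz2eq : z2 = sS a w - z1 := by
    rw [hz2d, hz1d]; simp only [zz1, zz2, sS]; ring
  have hy2eq : y2 = sS a w0 - y1 := by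
    rw [hy2d, hy1d]; simp only [zz1, zz2, sS]; ring
  -- case split
  have hcase : ‖z1 - y1‖ < δ1/2 ∨ ‖z1 - y2‖ < δ1/2 := by
    by_contra hc
    push_neg at hc
    obtain ⟨h1, h2⟩ := hc
    nlinarith [norm_nonneg (z1 - y1), norm_nonneg (z1 - y2)]
  have key : ∀ A B : ℂ, A ∈ closedBall a ρ → B ∈ closedBall a ρ →
      ‖z1 - A‖ < δ1 → ‖z2 - B‖ < δ1 →
      dist ((G z1 + G z2)/2) ((G A + G B)/2) < ε := by
    intro A B hA hB h1 h2
    have d1 : dist (G z1) (G A) < ε := hUC z1 hz1 A hA (by rwa [Complex.dist_eq])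
    have d2 : dist (G z2) (G B) < ε := hUC z2 hz2 B hB (by rwa [Complex.dist_eq])
    rw [Complex.dist_eq] at d1 d2 ⊢
    have heq : (G z1 + G z2)/2 - (G A + G B)/2 = ((G z1 - G A) + (G z2 - G B))/2 := by ring
    rw [heq]
    calc ‖((G z1 - G A) + (G z2 - G B))/2‖
        ≤ (‖G z1 - G A‖ + ‖G z2 - G B‖)/2 := by
          rw [norm_div]
          simp only [Complex.norm_two]
          gcongr
          exact norm_add_le _ _
      _ < ε := by linarith
  rcases hcase with h | h
  · have h2 : ‖z2 - y2‖ < δ1 := by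
      have heq : z2 - y2 = (sS a w - sS a w0) - (z1 - y1) := by
        rw [hz2eq, hy2eq]; ring
      rw [heq]
      calc ‖(sS a w - sS a w0) - (z1 - y1)‖
          ≤ ‖sS a w - sS a w0‖ + ‖z1 - y1‖ := by
            simpa using norm_sub_le (sS a w - sS a w0) (z1 - y1)
        _ < δ1 := by linarith
    exact key y1 y2 hy1 hy2 (by linarith) h2
  · have h2 : ‖z2 - y1‖ < δ1 := by
      have heq : z2 - y1 = (sS a w - sS a w0) - (z1 - y2) := by
        rw [hz2eq, hy2eq]; ring
      rw [heq]
      calc ‖(sS a w - sS a w0) - (z1 - y2)‖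
          ≤ ‖sS a w - sS a w0‖ + ‖z1 - y2‖ := by
            simpa using norm_sub_le (sS a w - sS a w0) (z1 - y2)
        _ < δ1 := by linarith
    have := key y2 y1 hy2 hy1 (by linarith) h2
    have hcomm : (G y2 + G y1)/2 = (G y1 + G y2)/2 := by ring
    rwa [hcomm] at this

lemma dd_cont (a : ℂ) (ρ : ℝ) : Continuous (dd a ρ) := by
  unfold dd sS; fun_prop

lemma dd_diff (a : ℂ) (ρ : ℝ) : Differentiable ℂ (dd a ρ) := by
  unfold dd sS; fun_prop

lemma dd_countable (ha : ‖a‖ < ρ) : Set.Countable {w : ℂ | dd a ρ w = 0} := by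
  have hρ : 0 < ρ := lt_of_le_of_lt (norm_nonneg a) ha
  set c : ℂ := ((ρ^2 - Complex.normSq a : ℝ) : ℂ) with hc
  set p : Polynomial ℂ := Polynomial.C (conj a^2) * Polynomial.X^2
    + Polynomial.C (2*a*conj a + 4*c) * Polynomial.X + Polynomial.C (a^2) with hp
  have heval : ∀ x, p.eval x = dd a ρ x := by
    intro x
    simp only [hp, dd, sS, Polynomial.eval_add, Polynomial.eval_mul, Polynomial.eval_pow,
      Polynomial.eval_C, Polynomial.eval_X, ← hc]
    ring
  have hcoeff : p.coeff 1 = 2*a*conj a + 4*c := by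
    rw [hp]
    simp only [Polynomial.coeff_add, Polynomial.coeff_C_mul, Polynomial.coeff_X_pow,
      Polynomial.coeff_X_one, Polynomial.coeff_C]
    norm_num
  have hcne : (2*a*conj a + 4*c : ℂ) ≠ 0 := by
    have h1 : (2*a*conj a + 4*c : ℂ) = ((2 * Complex.normSq a + 4*(ρ^2 - Complex.normSq a) : ℝ) : ℂ) := by
      rw [hc]
      have : a * conj a = ((Complex.normSq a : ℝ) : ℂ) := Complex.mul_conj a
      push_cast
      linear_combination 2 * this
    rw [h1]
    have h2 : Complex.normSq a < ρ^2 := by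
      rw [← Complex.sq_norm]; nlinarith [norm_nonneg a]
    have h3 : (2 * Complex.normSq a + 4*(ρ^2 - Complex.normSq a) : ℝ) ≠ 0 := by
      nlinarith [Complex.normSq_nonneg a]
    exact_mod_cast Complex.ofReal_ne_zero.mpr h3
  have hpne : p ≠ 0 := by
    intro h
    rw [h] at hcoeff
    simp at hcoeff
    exact hcne hcoeff.symm
  have hset : {w : ℂ | dd a ρ w = 0} = {x : ℂ | p.IsRoot x} := by
    ext x
    simp [Polynomial.IsRoot, heval x]
  rw [hset]
  exact (Polynomial.finite_setOf_isRoot hpne).countable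

lemma g_diff_at (ha : ‖a‖ < ρ) {G : ℂ → ℂ}
    (hGd : DifferentiableOn ℂ G (ball a ρ)) {w0 : ℂ}
    (hw : w0 ∈ ball (0:ℂ) 1) (hd0 : dd a ρ w0 ≠ 0) :
    DifferentiableAt ℂ (fun w => (G (zz1 a ρ w) + G (zz2 a ρ w)) / 2) w0 := by
  have hw1 : ‖w0‖ < 1 := by
    have := mem_ball.mp hw; rwa [Complex.dist_eq, sub_zero] at this
  set r : ℂ → ℂ := fun w => ee a ρ w0 * Complex.exp (Complex.log (dd a ρ w / dd a ρ w0) / 2)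
    with hrdef
  have hr0 : r w0 = ee a ρ w0 := by
    rw [hrdef]
    simp [div_self hd0, Complex.log_one]
  have hrsq : ∀ w, dd a ρ w ≠ 0 → (r w)^2 = dd a ρ w := by
    intro w hdw
    rw [hrdef]
    simp only
    rw [mul_pow, sq (Complex.exp _), ← Complex.exp_add]
    have h2 : Complex.log (dd a ρ w / dd a ρ w0) / 2 + Complex.log (dd a ρ w / dd a ρ w0) / 2
        = Complex.log (dd a ρ w / dd a ρ w0) := by ring
    rw [h2, Complex.exp_log (div_ne_zero hdw hd0), ee_sq]
    field_simp
  set h : ℂ → ℂ := fun w => (G ((sS a w + r w)/2) + G ((sS a w - r w)/2))/2 with hhdef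
  have heq : ∀ w, dd a ρ w ≠ 0 → (G (zz1 a ρ w) + G (zz2 a ρ w)) / 2 = h w := by
    intro w hdw
    rcases sq_eq_dd a ρ w (hrsq w hdw) with hcase | hcase
    · rw [hhdef]
      simp only [zz1, zz2, hcase]
    · rw [hhdef]
      simp only [zz1, zz2, hcase]
      ring_nf
  have hnhds : ∀ᶠ w in nhds w0, dd a ρ w ≠ 0 :=
    (dd_cont a ρ).continuousAt.eventually_ne hd0
  have heqev : (fun w => (G (zz1 a ρ w) + G (zz2 a ρ w)) / 2) =ᶠ[nhds w0] h :=
    hnhds.mono heq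
  rw [Filter.EventuallyEq.differentiableAt_iff heqev]
  -- differentiability of h at w0
  have hrd : DifferentiableAt ℂ r w0 := by
    apply DifferentiableAt.const_mul
    apply DifferentiableAt.cexp
    apply DifferentiableAt.div_const
    have hq : DifferentiableAt ℂ (fun w => dd a ρ w / dd a ρ w0) w0 :=
      (dd_diff a ρ).differentiableAt.div_const _
    have h1mem : (dd a ρ w0 / dd a ρ w0) ∈ Complex.slitPlane := by
      rw [div_self hd0]; exact Complex.one_mem_slitPlane
    exact (Complex.differentiableAt_log h1mem).comp w0 hq
  have hsd : DifferentiableAt ℂ (fun w => sS a w) w0 := by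
    unfold sS; fun_prop
  have hmem1 : (sS a w0 + r w0)/2 ∈ ball a ρ := by
    rw [hr0]
    exact root_mem_ball ha hw1 (zz1_root a ρ w0)
  have hmem2 : (sS a w0 - r w0)/2 ∈ ball a ρ := by
    rw [hr0]
    exact root_mem_ball ha hw1 (zz2_root a ρ w0)
  have hG1 : DifferentiableAt ℂ G ((sS a w0 + r w0)/2) :=
    hGd.differentiableAt (isOpen_ball.mem_nhds hmem1)
  have hG2 : DifferentiableAt ℂ G ((sS a w0 - r w0)/2) :=
    hGd.differentiableAt (isOpen_ball.mem_nhds hmem2)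
  apply DifferentiableAt.div_const
  exact ((hG1.comp w0 ((hsd.add hrd).div_const 2)).add
    (hG2.comp w0 ((hsd.sub hrd).div_const 2)))

lemma g_diff (ha : ‖a‖ < ρ) {G : ℂ → ℂ} (hGc : ContinuousOn G (closedBall a ρ))
    (hGd : DifferentiableOn ℂ G (ball a ρ)) :
    DifferentiableOn ℂ (fun w => (G (zz1 a ρ w) + G (zz2 a ρ w)) / 2) (ball (0:ℂ) 1) := by
  have hfs := Complex.hasFPowerSeriesOnBall_of_differentiable_off_countable
    (R := 1) (c := 0) (f := fun w => (G (zz1 a ρ w) + G (zz2 a ρ w)) / 2)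
    (s := {w : ℂ | dd a ρ w = 0}) (dd_countable ha)
    (by simpa using g_cont ha hGc)
    (fun z hz => g_diff_at ha hGd (by simpa using hz.1) hz.2) one_pos
  have h2 := hfs.differentiableOn
  rw [Metric.emetric_ball_nnreal] at h2
  simpa using h2

theorem stmt16 (f : ℂ → ℂ) (hf : ContinuousOn f {(0 : ℂ)}ᶜ)
    (hline : ∀ z : ℂ, z ≠ 0 → ∀ t : ℝ, t ≠ 0 → f ((t : ℂ) * z) = f z) :
    ((∃ (a : ℂ) (ρ : ℝ), 0 < ρ ∧ ‖a‖ < ρ ∧ ExtHol f a ρ) ↔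
      (∀ (a : ℂ) (ρ : ℝ), 0 < ρ → ‖a‖ < ρ → ExtHol f a ρ)) ∧
    ((∃ (a : ℂ) (ρ : ℝ), 0 < ρ ∧ ‖a‖ < ρ ∧ ExtHol f a ρ) ↔
      (∃ g : ℂ → ℂ, ContinuousOn g (closedBall 0 1) ∧
        DifferentiableOn ℂ g (ball 0 1) ∧
        ∀ z : ℂ, z ≠ 0 → f z = g (z / conj z))) := by
  have L2' : (∃ (a : ℂ) (ρ : ℝ), 0 < ρ ∧ ‖a‖ < ρ ∧ ExtHol f a ρ) →
      (∃ g : ℂ → ℂ, ContinuousOn g (closedBall 0 1) ∧ DifferentiableOn ℂ g (ball 0 1) ∧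
        ∀ z : ℂ, z ≠ 0 → f z = g (z / conj z)) := by
    rintro ⟨a, ρ, hρ, ha, G, hGc, hGd, hGb⟩
    refine ⟨fun w => (G (zz1 a ρ w) + G (zz2 a ρ w)) / 2, g_cont ha hGc, g_diff ha hGc hGd, ?_⟩
    intro z hz
    exact (boundary_val hline ha hGb hz).symm
  have L1' : (∃ g : ℂ → ℂ, ContinuousOn g (closedBall 0 1) ∧ DifferentiableOn ℂ g (ball 0 1) ∧
        ∀ z : ℂ, z ≠ 0 → f z = g (z / conj z)) →
      ∀ (a : ℂ) (ρ : ℝ), 0 < ρ → ‖a‖ < ρ → ExtHol f a ρ := by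
    rintro ⟨g, h1, h2, h3⟩ a ρ hρ ha
    exact L1 h1 h2 h3 a ρ hρ ha
  constructor
  · constructor
    · intro h; exact L1' (L2' h)
    · intro h; exact ⟨0, 1, one_pos, by simp, h 0 1 one_pos (by simp)⟩
  · constructor
    · exact L2'
    · intro h; exact ⟨0, 1, one_pos, by simp, L1' h 0 1 one_pos (by simp)⟩
end
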